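/- arXiv:1402.3712 — 9 statements merged into one kernel-verified Lean document; each statement's English description precedes it below -/
import Mathlib

section
/- Let X be a compact metric space. For all M < ∞ and ε, δ > 0, the integral ∫ exp[(min(ξ_δ, M) − ε)·τ] dμ̄ is finite, where ξ_δ(x) = sup{c ≥ 0 : ∫ e^{cτ} 1_{B_δ(x)} dμ̄ < ∞}. -/
open MeasureTheory ENNReal Filter Set Topology
open scoped NNReal

noncomputable def eexp (a : ℝ≥0∞) : ℝ≥0∞ :=
  if a = ⊤ then ⊤ else ENNReal.ofReal (Real.exp a.toReal)

noncomputable def xiSet {X : Type*} [MeasurableSpace X] (μ : Measure X) (τ : X → ℝ≥0∞)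
    (A : Set X) : ℝ≥0∞ :=
  sSup {c : ℝ≥0∞ | ∃ r : ℝ≥0, c = (r : ℝ≥0∞) ∧ ∫⁻ x in A, eexp ((r : ℝ≥0∞) * τ x) ∂μ < ⊤}

noncomputable def xiDelta {X : Type*} [MeasurableSpace X] [PseudoMetricSpace X]
    (μ : Measure X) (τ : X → ℝ≥0∞) (δ : ℝ) (x : X) : ℝ≥0∞ :=
  xiSet μ τ (Metric.ball x δ)

noncomputable def xi {X : Type*} [MeasurableSpace X] [PseudoMetricSpace X]
    (μ : Measure X) (τ : X → ℝ≥0∞) (x : X) : ℝ≥0∞ :=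
  ⨆ (δ : ℝ) (_ : 0 < δ), xiDelta μ τ δ x

lemma eexp_mono {a b : ℝ≥0∞} (h : a ≤ b) : eexp a ≤ eexp b := by
  unfold eexp
  by_cases hb : b = ⊤
  · simp [hb]
  · have ha : a ≠ ⊤ := fun h' => hb (top_le_iff.mp (h' ▸ h))
    simp only [ha, hb, if_false]
    exact ENNReal.ofReal_le_ofReal (Real.exp_le_exp.mpr (ENNReal.toReal_mono hb h))

lemma eexp_zero : eexp 0 = 1 := by simp [eexp]

lemma measurable_eexp : Measurable eexp := by
  unfold eexp
  exact Measurable.ite (measurableSet_singleton ⊤) measurable_const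
    (ENNReal.measurable_ofReal.comp (Real.measurable_exp.comp ENNReal.measurable_toReal))

lemma xiSet_anti {X : Type*} [MeasurableSpace X] (μ : Measure X) (τ : X → ℝ≥0∞)
    {A B : Set X} (h : A ⊆ B) : xiSet μ τ B ≤ xiSet μ τ A := by
  apply sSup_le_sSup
  rintro c ⟨r, rfl, hfin⟩
  exact ⟨r, rfl, lt_of_le_of_lt (lintegral_mono' (Measure.restrict_mono h le_rfl) le_rfl) hfin⟩

/-- Lemma `l:unifint`, first part: on a compact metric space, for every
finite `M` and `ε, δ > 0`, `∫ exp[(ξ_δ ∧ M − ε) τ] dμ̄ < ∞`. -/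
theorem stmt4 {X : Type*} [MetricSpace X] [CompactSpace X] [MeasurableSpace X] [BorelSpace X]
    (μ : Measure X) [IsProbabilityMeasure μ] (τ : X → ℝ≥0∞) (hτ : Measurable τ)
    (M : ℝ≥0) (ε : ℝ≥0) (hε : 0 < ε) (δ : ℝ) (hδ : 0 < δ) :
    ∫⁻ x, eexp ((min (xiDelta μ τ δ x) (M : ℝ≥0∞) - (ε : ℝ≥0∞)) * τ x) ∂μ < ⊤ := by
  -- finite subcover by balls of radius δ/2
  obtain ⟨t, ht⟩ := isCompact_univ.elim_finite_subcover
    (fun y : X => Metric.ball y (δ / 2)) (fun _ => Metric.isOpen_ball)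
    (fun x _ => Set.mem_iUnion.mpr ⟨x, Metric.mem_ball_self (by linarith)⟩)
  set f : X → ℝ≥0∞ :=
    fun x => eexp ((min (xiDelta μ τ δ x) (M : ℝ≥0∞) - (ε : ℝ≥0∞)) * τ x) with hf
  have key : ∀ y : X, ∫⁻ x in Metric.ball y (δ / 2), f x ∂μ < ⊤ := by
    intro y
    set a : ℝ≥0∞ := min (xiDelta μ τ (δ / 2) y) (M : ℝ≥0∞) - (ε : ℝ≥0∞) with ha
    -- pointwise bound on the ball
    have hsub : ∀ x ∈ Metric.ball y (δ / 2), Metric.ball y (δ / 2) ⊆ Metric.ball x δ := by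
      intro x hx z hz
      rw [Metric.mem_ball] at *
      calc dist z x ≤ dist z y + dist y x := dist_triangle z y x
        _ < δ / 2 + δ / 2 := by
            have := dist_comm x y ▸ hx; exact add_lt_add hz this
        _ = δ := by ring
    have hbound : ∀ x ∈ Metric.ball y (δ / 2), f x ≤ eexp (a * τ x) := by
      intro x hx
      apply eexp_mono
      apply mul_le_mul_left
      apply tsub_le_tsub_right
      exact min_le_min_right _ (xiSet_anti μ τ (hsub x hx))
    have hmeas : Measurable fun x => eexp (a * τ x) :=
      measurable_eexp.comp (hτ.const_mul a)
    refine lt_of_le_of_lt (setLIntegral_mono hmeas hbound) ?_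
    by_cases h0 : min (xiDelta μ τ (δ / 2) y) (M : ℝ≥0∞) ≤ (ε : ℝ≥0∞)
    · have : a = 0 := tsub_eq_zero_of_le h0
      simp only [this, zero_mul, eexp_zero, lintegral_one, Measure.restrict_apply_univ]
      exact lt_of_le_of_lt prob_le_one (by norm_num)
    · push_neg at h0
      have hmin_ne_top : min (xiDelta μ τ (δ / 2) y) (M : ℝ≥0∞) ≠ ⊤ :=
        ne_top_of_le_ne_top coe_ne_top (min_le_right _ _)
      have hmin_ne_zero : min (xiDelta μ τ (δ / 2) y) (M : ℝ≥0∞) ≠ 0 :=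
        fun h => by simp [h] at h0
      have halt : a < xiDelta μ τ (δ / 2) y := by
        calc a < min (xiDelta μ τ (δ / 2) y) (M : ℝ≥0∞) :=
              ENNReal.sub_lt_self hmin_ne_top hmin_ne_zero (by exact_mod_cast hε.ne')
          _ ≤ xiDelta μ τ (δ / 2) y := min_le_left _ _
      rw [xiDelta, xiSet, lt_sSup_iff] at halt
      obtain ⟨c, ⟨r, rfl, hfin⟩, hlt⟩ := halt
      refine lt_of_le_of_lt (lintegral_mono fun x => ?_) hfin
      exact eexp_mono (mul_le_mul_left hlt.le _)
  -- sum over the finite cover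
  calc ∫⁻ x, f x ∂μ = ∫⁻ x in Set.univ, f x ∂μ := by rw [Measure.restrict_univ]
    _ ≤ ∫⁻ x in ⋃ y ∈ t, Metric.ball y (δ / 2), f x ∂μ :=
        lintegral_mono' (Measure.restrict_mono ht le_rfl) le_rfl
    _ = ∫⁻ x in ⋃ y : t, Metric.ball (y : X) (δ / 2), f x ∂μ := by
        rw [show (⋃ y ∈ t, Metric.ball y (δ / 2)) = ⋃ y : t, Metric.ball (y : X) (δ / 2) by
          ext x; simp]
    _ ≤ ∑' y : t, ∫⁻ x in Metric.ball (y : X) (δ / 2), f x ∂μ :=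
        lintegral_iUnion_le _ _
    _ < ⊤ := by
        rw [tsum_fintype]
        exact ENNReal.sum_lt_top.mpr fun y _ => key y
end

section
/- If f : X → (−∞,∞] is lower semicontinuous and ∫ e^{τ f} dμ̄ < ∞, then f(x) ≤ ξ(x) for all x ∈ X, where ξ(x) = sup_{δ>0} sup{c ≥ 0 : ∫ e^{cτ} 1_{B_δ(x)} dμ̄ < ∞}. -/
open MeasureTheory ENNReal Filter Set Topology
open scoped NNReal

lemma eexp_eq_exp (a : ℝ≥0∞) : eexp a = EReal.exp (a : EReal) := by
  cases a with
  | top => simp [eexp]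
  | coe r => 
    rw [show ((r : ℝ≥0∞) : EReal) = ((r : ℝ) : EReal) by norm_cast, EReal.exp_coe]
    simp [eexp]

/-- Lemma `l:unifint`, second part: if `f : X → (−∞,∞]` is lower
semicontinuous and `∫ e^{τ f} dμ̄ < ∞`, then `f ≤ ξ` everywhere. -/
theorem stmt5 {X : Type*} [MetricSpace X] [MeasurableSpace X] [BorelSpace X]
    (μ : Measure X) [IsProbabilityMeasure μ] (τ : X → ℝ≥0∞) (hτ : Measurable τ)
    (f : X → EReal) (hf : LowerSemicontinuous f) (hf' : ∀ x, f x ≠ ⊥)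
    (hint : ∫⁻ x, EReal.exp ((τ x : EReal) * f x) ∂μ < ⊤) :
    ∀ x, f x ≤ (xi μ τ x : EReal) := by
  intro x
  have key : ∀ c : ℝ≥0, (c : EReal) < f x → (c : ℝ≥0∞) ≤ xi μ τ x := by
    intro c hc
    obtain ⟨U, hU, hUf⟩ := (hf x (c : EReal) hc).exists_mem
    obtain ⟨δ, hδ, hball⟩ := Metric.mem_nhds_iff.mp hU
    have hmem : (c : ℝ≥0∞) ∈ {d : ℝ≥0∞ | ∃ r : ℝ≥0, d = (r : ℝ≥0∞) ∧
        ∫⁻ y in Metric.ball x δ, eexp ((r : ℝ≥0∞) * τ y) ∂μ < ⊤} := by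
      refine ⟨c, rfl, lt_of_le_of_lt ?_ hint⟩
      calc ∫⁻ y in Metric.ball x δ, eexp ((c : ℝ≥0∞) * τ y) ∂μ
          ≤ ∫⁻ y in Metric.ball x δ, EReal.exp ((τ y : EReal) * f y) ∂μ := by
            refine setLIntegral_mono' Metric.isOpen_ball.measurableSet fun y hy => ?_
            rw [eexp_eq_exp]
            apply EReal.exp_monotone
            rw [EReal.coe_ennreal_mul, mul_comm]
            refine mul_le_mul_of_nonneg_left ?_ (EReal.coe_ennreal_nonneg _)
            exact_mod_cast (hUf y (hball hy)).le
        _ ≤ ∫⁻ y, EReal.exp ((τ y : EReal) * f y) ∂μ := setLIntegral_le_lintegral _ _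
    calc (c : ℝ≥0∞) ≤ xiDelta μ τ δ x := le_sSup hmem
      _ ≤ xi μ τ x := le_iSup₂ (f := fun δ (_ : 0 < δ) => xiDelta μ τ δ x) δ hδ
  refine le_of_forall_lt_imp_le_of_dense fun z hz => ?_
  rcases le_or_gt z 0 with h0 | h0
  · exact h0.trans (EReal.coe_ennreal_nonneg _)
  · lift z to ℝ using ⟨(hz.trans_le le_top).ne, (bot_le.trans_lt h0).ne'⟩
    have hz0 : 0 ≤ z := by exact_mod_cast h0.le
    have := key z.toNNReal (by
      rw [show ((z.toNNReal : ℝ≥0) : EReal) = ((z.toNNReal : ℝ) : EReal) from rfl,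
        Real.coe_toNNReal z hz0]; exact hz)
    calc (z : EReal) = ((z.toNNReal : ℝ≥0∞) : EReal) := by
          rw [show ((z.toNNReal : ℝ≥0∞) : EReal) = ((z.toNNReal : ℝ) : EReal) by
            norm_cast, Real.coe_toNNReal z hz0]
      _ ≤ (xi μ τ x : EReal) := by exact_mod_cast EReal.coe_ennreal_le_coe_ennreal_iff.mpr this
end

section
/- On a compact metric space, ξ(x) = sup{ f(x) : f lower semicontinuous on X with ∫ e^{τ f} dμ̄ < ∞ }, for every x ∈ X. -/
open MeasureTheory ENNReal Filter Set Topology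
open scoped NNReal

/-- `EReal.exp (t * r) = eexp (r * t)` for `t : ℝ≥0∞`, `r : ℝ≥0`. -/
lemma exp_coe_mul (r : ℝ≥0) (t : ℝ≥0∞) :
    EReal.exp ((t : EReal) * ((r : ℝ≥0∞) : EReal)) = eexp ((r : ℝ≥0∞) * t) := by
  rcases eq_or_ne t ⊤ with ht | ht
  · subst ht
    rcases eq_or_ne r 0 with hr | hr
    · subst hr
      simp [eexp]
    · have h1 : ((⊤ : ℝ≥0∞) : EReal) * ((r : ℝ≥0∞) : EReal) = ⊤ := by
        rw [← EReal.coe_ennreal_mul, ENNReal.top_mul (by exact_mod_cast hr)]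
        exact EReal.coe_ennreal_top
      have h2 : (r : ℝ≥0∞) * ⊤ = ⊤ := ENNReal.mul_top (by exact_mod_cast hr)
      rw [h1, h2]
      simp [eexp]
  · have hfin : (r : ℝ≥0∞) * t ≠ ⊤ := ENNReal.mul_ne_top ENNReal.coe_ne_top ht
    have h1 : ((t : EReal) * ((r : ℝ≥0∞) : EReal)) = ((t.toReal * (r : ℝ) : ℝ) : EReal) := by
      rw [show (t : EReal) = ((t.toReal : ℝ) : EReal) by
            rw [← ENNReal.ofReal_toReal ht, EReal.coe_ennreal_ofReal,
              max_eq_left ENNReal.toReal_nonneg, ENNReal.toReal_ofReal ENNReal.toReal_nonneg],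
          EReal.coe_nnreal_eq_coe_real, ← EReal.coe_mul]
    rw [h1, eexp, if_neg hfin]
    simp only [EReal.exp_coe]
    congr 1
    rw [ENNReal.toReal_mul]
    simp [mul_comm]

/-- formula `e:xi2`: on a compact metric space,
`ξ(x) = sup{ f(x) : f lsc on X, ∫ e^{τ f} dμ̄ < ∞ }` for every `x`. -/
theorem stmt6 {X : Type*} [MetricSpace X] [CompactSpace X] [MeasurableSpace X] [BorelSpace X]
    (μ : Measure X) [IsProbabilityMeasure μ] (τ : X → ℝ≥0∞) (hτ : Measurable τ) (x : X) :
    (xi μ τ x : EReal) =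
      sSup {v : EReal | ∃ f : X → EReal, LowerSemicontinuous f ∧ (∀ y, f y ≠ ⊥) ∧
        (∫⁻ y, EReal.exp ((τ y : EReal) * f y) ∂μ < ⊤) ∧ v = f x} := by
  set S : Set EReal := {v : EReal | ∃ f : X → EReal, LowerSemicontinuous f ∧ (∀ y, f y ≠ ⊥) ∧
        (∫⁻ y, EReal.exp ((τ y : EReal) * f y) ∂μ < ⊤) ∧ v = f x} with hS
  -- the zero function shows `0 ∈ S`
  have hzero : (0 : EReal) ∈ S := by
    refine ⟨fun _ => 0, lowerSemicontinuous_const, fun y => by simp, ?_, rfl⟩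
    have : ∀ y : X, EReal.exp ((τ y : EReal) * 0) = 1 := by
      intro y; rw [mul_zero, EReal.exp_zero]
    simp only [this, lintegral_one, measure_univ]
    exact one_lt_top
  have hS0 : (0 : EReal) ≤ sSup S := le_sSup hzero
  -- membership of indicator functions
  have hind : ∀ (δ : ℝ) (r : ℝ≥0), 0 < δ →
      (∫⁻ y in Metric.ball x δ, eexp ((r : ℝ≥0∞) * τ y) ∂μ < ⊤) →
      ((r : ℝ≥0∞) : EReal) ∈ S := by
    intro δ r hδ hint
    set f : X → EReal := (Metric.ball x δ).indicator (fun _ => ((r : ℝ≥0∞) : EReal)) with hf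
    have hfx : f x = ((r : ℝ≥0∞) : EReal) := by
      simp [hf, Set.indicator_of_mem (Metric.mem_ball_self hδ)]
    refine ⟨f, Metric.isOpen_ball.lowerSemicontinuous_indicator
      (EReal.coe_ennreal_nonneg _), ?_, ?_, hfx.symm⟩
    · intro y
      by_cases hy : y ∈ Metric.ball x δ <;>
        simp [hf, Set.indicator_apply, hy, EReal.coe_ennreal_ne_bot]
    · rw [← lintegral_add_compl (fun y => EReal.exp ((τ y : EReal) * f y))
        measurableSet_ball (μ := μ)]
      have hball : ∫⁻ y in Metric.ball x δ, EReal.exp ((τ y : EReal) * f y) ∂μ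
          = ∫⁻ y in Metric.ball x δ, eexp ((r : ℝ≥0∞) * τ y) ∂μ := by
        refine setLIntegral_congr_fun measurableSet_ball (fun y hy => ?_)
        rw [hf, Set.indicator_of_mem hy, exp_coe_mul]
      have hcompl : ∫⁻ y in (Metric.ball x δ)ᶜ, EReal.exp ((τ y : EReal) * f y) ∂μ
          = ∫⁻ y in (Metric.ball x δ)ᶜ, 1 ∂μ := by
        refine setLIntegral_congr_fun measurableSet_ball.compl
          (fun y hy => ?_)
        rw [hf, Set.indicator_of_notMem hy, mul_zero, EReal.exp_zero]
      rw [hball, hcompl]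
      refine ENNReal.add_lt_top.2 ⟨hint, ?_⟩
      rw [setLIntegral_one]
      exact (prob_le_one).trans_lt one_lt_top
  apply le_antisymm
  · -- xi ≤ sup S
    refine le_of_forall_lt fun c hc => ?_
    rcases lt_or_ge c 0 with hc0 | hc0
    · exact hc0.trans_le hS0
    · have hcne : c ≠ ⊤ := ne_top_of_lt hc
      have hcnb : c ≠ ⊥ := fun h => by simp [h] at hc0
      obtain ⟨p, rfl⟩ : ∃ p : ℝ, c = (p : EReal) := ⟨c.toReal, (EReal.coe_toReal hcne hcnb).symm⟩
      have hp0 : 0 ≤ p := EReal.coe_nonneg.1 hc0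
      have hcoe : ((Real.toNNReal p : ℝ≥0∞) : EReal) = (p : EReal) := by
        rw [EReal.coe_nnreal_eq_coe_real]
        exact_mod_cast Real.coe_toNNReal p hp0
      have h1 : (Real.toNNReal p : ℝ≥0∞) < xi μ τ x := by
        rw [← EReal.coe_ennreal_lt_coe_ennreal_iff, hcoe]
        exact hc
      rw [xi] at h1
      obtain ⟨δ, h2⟩ := lt_iSup_iff.1 h1
      obtain ⟨hδ, h3⟩ := lt_iSup_iff.1 h2
      rw [xiDelta, xiSet] at h3
      obtain ⟨b, hb, hab⟩ := lt_sSup_iff.1 h3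
      obtain ⟨r, rfl, hint⟩ := hb
      have : (p : EReal) < ((r : ℝ≥0∞) : EReal) := by
        rw [← hcoe]
        exact EReal.coe_ennreal_lt_coe_ennreal_iff.2 hab
      exact this.trans_le (le_sSup (hind δ r hδ hint))
  · -- sup S ≤ xi
    refine sSup_le fun v hv => ?_
    obtain ⟨f, hlsc, hne, hint, rfl⟩ := hv
    refine le_of_forall_lt fun c hc => ?_
    rcases lt_or_ge c 0 with hc0 | hc0
    · exact hc0.trans_le (EReal.coe_ennreal_nonneg _)
    · obtain ⟨q, hcq, hqf⟩ := EReal.exists_between_coe_real hc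
      have hq0 : 0 ≤ q := by
        have := hc0.trans hcq.le
        exact_mod_cast EReal.coe_nonneg.1 this
      set ρ : ℝ≥0 := Real.toNNReal q with hρ
      have hρq : ((ρ : ℝ≥0∞) : EReal) = (q : EReal) := by
        rw [EReal.coe_nnreal_eq_coe_real]
        exact_mod_cast Real.coe_toNNReal q hq0
      -- lsc gives a ball where f > q
      have hev : ∀ᶠ y in 𝓝 x, (q : EReal) < f y := hlsc x _ hqf
      obtain ⟨δ, hδ, hb⟩ := Metric.eventually_nhds_iff.1 hev
      -- the exponential moment on the ball is finite
      have hmom : ∫⁻ y in Metric.ball x δ, eexp ((ρ : ℝ≥0∞) * τ y) ∂μ < ⊤ := by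
        have hle : ∫⁻ y in Metric.ball x δ, eexp ((ρ : ℝ≥0∞) * τ y) ∂μ
            ≤ ∫⁻ y in Metric.ball x δ, EReal.exp ((τ y : EReal) * f y) ∂μ := by
          refine lintegral_mono_ae ((ae_restrict_iff' measurableSet_ball).2
            (ae_of_all _ fun y hy => ?_))
          rw [← exp_coe_mul]
          refine EReal.exp_monotone (mul_le_mul_of_nonneg_left ?_ (EReal.coe_ennreal_nonneg _))
          rw [hρq]
          exact (hb (Metric.mem_ball.1 hy)).le
        exact hle.trans_lt ((setLIntegral_le_lintegral _ _).trans_lt hint)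
      have hmem : (ρ : ℝ≥0∞) ∈ {c : ℝ≥0∞ | ∃ r : ℝ≥0, c = (r : ℝ≥0∞) ∧
          ∫⁻ y in Metric.ball x δ, eexp ((r : ℝ≥0∞) * τ y) ∂μ < ⊤} := ⟨ρ, rfl, hmom⟩
      have h1 : (ρ : ℝ≥0∞) ≤ xi μ τ x := by
        refine le_trans (le_sSup hmem) ?_
        exact le_iSup_of_le δ (le_iSup_of_le hδ le_rfl)
      calc c < (q : EReal) := hcq
        _ = ((ρ : ℝ≥0∞) : EReal) := hρq.symm
        _ ≤ (xi μ τ x : EReal) := EReal.coe_ennreal_le_coe_ennreal_iff.2 h1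
end

section
/- Assume μ̄(⋂_{M>0} closure({τ ≥ M})) = 0 (i.e., assumption (A2) holds under upper semicontinuity of τ at infinity). Then μ̄({ξ < ∞}) = 0, i.e., ξ(x) = ∞ for μ̄-almost every x. -/
open MeasureTheory ENNReal Filter Set Topology
open scoped NNReal

lemma eexp_lt_top {a : ℝ≥0∞} (ha : a ≠ ⊤) : eexp a < ⊤ := by
  unfold eexp; rw [if_neg ha]; exact ENNReal.ofReal_lt_top

/-- if `μ̄(⋂_{M>0} closure{τ ≥ M}) = 0` (together with (A1)), then
assumption (A2) holds: `ξ = ∞` for `μ̄`-almost every `x`. -/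
theorem stmt7 {X : Type*} [MetricSpace X] [MeasurableSpace X] [BorelSpace X]
    (μ : Measure X) [IsProbabilityMeasure μ] (τ : X → ℝ≥0∞) (hτ : Measurable τ)
    (h0 : μ {x | τ x = 0} = 0) (hinf : μ {x | τ x = ⊤} = 0)
    (hclos : μ (⋂ (M : ℝ) (_ : 0 < M), closure {x | ENNReal.ofReal M ≤ τ x}) = 0) :
    μ {x | xi μ τ x < ⊤} = 0 := by
  apply measure_mono_null _ hclos
  intro x hx
  simp only [mem_setOf_eq] at hx
  rw [mem_iInter₂]
  by_contra hxS
  push_neg at hxS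
  obtain ⟨M, hM, hxM⟩ := hxS
  have hopen : IsOpen (closure {x | ENNReal.ofReal M ≤ τ x})ᶜ := isClosed_closure.isOpen_compl
  obtain ⟨δ, hδ, hball⟩ := Metric.isOpen_iff.mp hopen x hxM
  have hbound : ∀ y ∈ Metric.ball x δ, τ y ≤ ENNReal.ofReal M := by
    intro y hy
    have := hball hy
    have : y ∉ {x | ENNReal.ofReal M ≤ τ x} := fun h => this (subset_closure h)
    simpa [not_le] using le_of_lt (not_le.mp this)
  have hxi : xiDelta μ τ δ x = ⊤ := by
    unfold xiDelta xiSet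
    rw [eq_top_iff]
    refine le_trans ENNReal.iSup_natCast.ge (iSup_le fun n => le_sSup ⟨n, by simp, ?_⟩)
    calc ∫⁻ y in Metric.ball x δ, eexp ((n : ℝ≥0∞) * τ y) ∂μ
        ≤ ∫⁻ _ in Metric.ball x δ, eexp ((n : ℝ≥0∞) * ENNReal.ofReal M) ∂μ := by
          apply setLIntegral_mono' measurableSet_ball
          intro y hy
          exact eexp_mono (mul_le_mul_right (hbound y hy) _)
      _ = eexp ((n : ℝ≥0∞) * ENNReal.ofReal M) * μ (Metric.ball x δ) :=
          setLIntegral_const _ _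
      _ < ⊤ := ENNReal.mul_lt_top
          (eexp_lt_top (ENNReal.mul_ne_top (by simp) ENNReal.ofReal_ne_top))
          (measure_lt_top μ _)
  have : xi μ τ x = ⊤ := by
    rw [eq_top_iff, ← hxi]
    exact le_iSup₂ (f := fun δ (_ : 0 < δ) => xiDelta μ τ δ x) δ hδ
  rw [this] at hx
  exact lt_irrefl _ hx
end

section
/- H(ν|μ) = sup_{φ ∈ C_b(X)} [ν(φ) − log μ(e^φ)] equals ∫ h(dν/dμ) dμ if ν ≪ μ and +∞ otherwise, where h(ρ) = ρ(log ρ − 1) + 1. -/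
open MeasureTheory ENNReal Filter Set Topology
open scoped NNReal

/-- The convex function `h(ρ) = ρ(log ρ − 1) + 1`, extended to `[0,∞]`. -/
noncomputable def hEnt (ρ : ℝ≥0∞) : ℝ≥0∞ :=
  if ρ = ⊤ then ⊤ else ENNReal.ofReal (ρ.toReal * (Real.log ρ.toReal - 1) + 1)

/-- Relative entropy `H(ν|μ) = ∫ h(dν/dμ) dμ` if `ν ≪ μ`, and `+∞` otherwise. -/
noncomputable def relEnt {α : Type*} [MeasurableSpace α] (ν μ : Measure α) : ℝ≥0∞ :=
  open scoped Classical in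
  if ν ≪ μ then ∫⁻ x, hEnt (ν.rnDeriv μ x) ∂μ else ⊤

/-- The absolutely continuous part of `ν` with respect to `μ`. -/
noncomputable def absPart {α : Type*} [MeasurableSpace α] (ν μ : Measure α) : Measure α :=
  μ.withDensity (ν.rnDeriv μ)

/-- The normalized measure `ν̄(dx) = (1/τ(x)) ν(dx) / ν(1/τ)`. -/
noncomputable def tauTilt {X : Type*} [MeasurableSpace X] (τ : X → ℝ≥0∞) (ν : Measure X) :
    Measure X :=
  (∫⁻ x, (τ x)⁻¹ ∂ν)⁻¹ • ν.withDensity (fun x => (τ x)⁻¹)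

/-- The large deviations rate functional
`I(ν) = ν_a(1/τ) H(ν̄_a|μ̄) + ν_s(ξ)` if `ν_a(1/τ) < ∞`, `+∞` otherwise. -/
noncomputable def Ifun {X : Type*} [MeasurableSpace X] [PseudoMetricSpace X]
    (μ : Measure X) (τ : X → ℝ≥0∞) (ν : Measure X) : ℝ≥0∞ :=
  if ∫⁻ x, (τ x)⁻¹ ∂(absPart ν μ) = ⊤ then ⊤
  else (∫⁻ x, (τ x)⁻¹ ∂(absPart ν μ)) * relEnt (tauTilt τ (absPart ν μ)) μ
    + ∫⁻ x, xi μ τ x ∂(ν.singularPart μ)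

/-- `ξ^∞`: the exponential-moment threshold at infinity. -/
noncomputable def xiInf {X : Type*} [MeasurableSpace X] [TopologicalSpace X]
    (μ : Measure X) (τ : X → ℝ≥0∞) : ℝ≥0∞ :=
  sSup {c : ℝ≥0∞ | ∃ r : ℝ≥0, c = (r : ℝ≥0∞) ∧
    ∃ K : Set X, IsCompact K ∧ ∫⁻ x in Kᶜ, eexp ((r : ℝ≥0∞) * τ x) ∂μ < ⊤}

open BoundedContinuousFunction in
/-- The Donsker–Varadhan variational formula `sup_{φ ∈ C_b} [ν(φ) − log μ(e^φ)]`. -/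
noncomputable def relEntVar {X : Type*} [TopologicalSpace X] [MeasurableSpace X]
    (ν μ : Measure X) : ℝ≥0∞ :=
  ⨆ φ : X →ᵇ ℝ, ENNReal.ofReal (∫ x, φ x ∂ν - Real.log (∫ x, Real.exp (φ x) ∂μ))

section DVhelpers
open Real


lemma dv_young {t u : ℝ} (ht : 0 ≤ t) :
    t * u ≤ (t * (Real.log t - 1) + 1) + (Real.exp u - 1) := by
  rcases eq_or_lt_of_le ht with h | h
  · subst h
    have := Real.exp_nonneg u
    nlinarith
  · have h1 := Real.add_one_le_exp (u - Real.log t)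
    have h2 : Real.exp (u - Real.log t) = Real.exp u / t := by
      rw [Real.exp_sub, Real.exp_log h]
    rw [h2] at h1
    have h3 : t * ((u - Real.log t) + 1) ≤ t * (Real.exp u / t) :=
      mul_le_mul_of_nonneg_left h1 ht
    rw [mul_div_cancel₀ _ h.ne'] at h3
    nlinarith

lemma dv_hent_nonneg {t : ℝ} (ht : 0 ≤ t) : 0 ≤ t * (Real.log t - 1) + 1 := by
  have := dv_young (u := 0) ht
  simp at this; linarith

lemma dv_mul_log_ge {t : ℝ} (ht : 0 ≤ t) : -(Real.exp 1)⁻¹ ≤ t * Real.log t := by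
  rcases eq_or_lt_of_le ht with h | h
  · simp [← h]; positivity
  · have h1 := Real.add_one_le_exp (-(Real.log t) - 1)
    have h2 : Real.exp (-(Real.log t) - 1) = (Real.exp 1)⁻¹ / t := by
      rw [Real.exp_sub, Real.exp_neg, Real.exp_log h]; ring
    rw [h2] at h1
    have h3 : t * (-(Real.log t) - 1 + 1) ≤ t * ((Real.exp 1)⁻¹ / t) :=
      mul_le_mul_of_nonneg_left h1 ht
    rw [mul_div_cancel₀ _ h.ne'] at h3
    nlinarith

lemma dv_exp_lip {a b c : ℝ} (ha : a ≤ c) (hb : b ≤ c) :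
    |Real.exp a - Real.exp b| ≤ Real.exp c * |a - b| := by
  wlog hab : b ≤ a generalizing a b
  · rw [abs_sub_comm, abs_sub_comm a b]; exact this hb ha (le_of_not_ge hab)
  rw [abs_of_nonneg (sub_nonneg.2 (Real.exp_le_exp.2 hab)), abs_of_nonneg (sub_nonneg.2 hab)]
  have h1 : Real.exp a - Real.exp b = Real.exp a * (1 - Real.exp (b - a)) := by
    rw [mul_sub, mul_one, ← Real.exp_add]; ring_nf
  have h2 : 1 - Real.exp (b - a) ≤ a - b := by
    have := Real.add_one_le_exp (b - a); linarith
  have h3 : Real.exp a ≤ Real.exp c := Real.exp_le_exp.2 ha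
  have h4 : 0 ≤ 1 - Real.exp (b - a) := by
    have : Real.exp (b - a) ≤ 1 := by
      rw [Real.exp_le_one_iff]; linarith
    linarith
  calc Real.exp a - Real.exp b = Real.exp a * (1 - Real.exp (b - a)) := h1
    _ ≤ Real.exp c * (a - b) := by
        apply mul_le_mul h3 h2 h4 (Real.exp_nonneg c)

lemma dv_log_lip {A B c : ℝ} (hA : Real.exp (-c) ≤ A) (hB : Real.exp (-c) ≤ B) :
    |Real.log A - Real.log B| ≤ Real.exp c * |A - B| := by
  have hA0 : 0 < A := lt_of_lt_of_le (Real.exp_pos _) hA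
  have hB0 : 0 < B := lt_of_lt_of_le (Real.exp_pos _) hB
  wlog hab : B ≤ A generalizing A B
  · rw [abs_sub_comm, abs_sub_comm A B]; exact this hB hA hB0 hA0 (le_of_not_ge hab)
  rw [abs_of_nonneg (sub_nonneg.2 (Real.log_le_log hB0 hab)),
    abs_of_nonneg (sub_nonneg.2 hab)]
  have h1 : Real.log A - Real.log B = Real.log (A / B) := (Real.log_div hA0.ne' hB0.ne').symm
  have h2 : Real.log (A / B) ≤ A / B - 1 := Real.log_le_sub_one_of_pos (by positivity)
  have h3 : A / B - 1 = (A - B) / B := by field_simp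
  have h4 : (A - B) / B ≤ (A - B) * Real.exp c := by
    rw [div_le_iff₀ hB0]
    have h5 : 1 ≤ Real.exp c * B := by
      have := mul_le_mul_of_nonneg_left hB (Real.exp_nonneg c)
      rwa [← Real.exp_add, add_neg_cancel, Real.exp_zero] at this
    nlinarith [sub_nonneg.2 hab]
  calc Real.log A - Real.log B = Real.log (A / B) := h1
    _ ≤ A / B - 1 := h2
    _ = (A - B) / B := h3
    _ ≤ (A - B) * Real.exp c := h4
    _ = Real.exp c * (A - B) := mul_comm _ _

lemma dv_clamp_dist {c s t : ℝ} (h1 : -c ≤ s) (h2 : s ≤ c) :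
    |max (-c) (min c t) - s| ≤ |t - s| := by
  have h4 := le_abs_self (t - s)
  have h5 := neg_abs_le (t - s)
  rw [abs_le]
  rcases le_total t (-c) with h | h
  · have hm : max (-c) (min c t) = -c := by
      rcases le_total c t with h' | h'
      · rw [min_eq_left h', max_eq_left (le_trans h' h)]
      · rw [min_eq_right h', max_eq_left h]
    rw [hm]; constructor <;> [linarith; nlinarith [abs_nonneg (t - s)]]
  · rcases le_total c t with h' | h'
    · have hm : max (-c) (min c t) = c := by
        rw [min_eq_left h', max_eq_right (by linarith)]
      rw [hm]; constructor <;> [nlinarith [abs_nonneg (t - s)]; linarith]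
    · have hm : max (-c) (min c t) = t := by
        rw [min_eq_right h', max_eq_right h]
      rw [hm]; constructor <;> linarith


open BoundedContinuousFunction in
lemma relEntVar_le_lintegral_hEnt {X : Type*} [TopologicalSpace X] [MeasurableSpace X]
    [OpensMeasurableSpace X] (ν μ : Measure X) [IsProbabilityMeasure ν] [IsProbabilityMeasure μ]
    (hAC : ν ≪ μ) :
    relEntVar ν μ ≤ ∫⁻ x, hEnt (ν.rnDeriv μ x) ∂μ := by
  set T := ∫⁻ x, hEnt (ν.rnDeriv μ x) ∂μ with hTdef
  by_cases hT : T = ⊤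
  · simp [hT]
  set ρ : X → ℝ := fun x => (ν.rnDeriv μ x).toReal with hρdef
  have hρ_meas : Measurable ρ := (Measure.measurable_rnDeriv ν μ).ennreal_toReal
  have hρ_nonneg : ∀ x, 0 ≤ ρ x := fun x => ENNReal.toReal_nonneg
  have hρ_int : Integrable ρ μ := Measure.integrable_toReal_rnDeriv
  have hρ_int1 : ∫ x, ρ x ∂μ = 1 := by
    rw [hρdef, Measure.integral_toReal_rnDeriv hAC]; simp
  have hT_eq : T = ∫⁻ x, ENNReal.ofReal (ρ x * (Real.log (ρ x) - 1) + 1) ∂μ := by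
    rw [hTdef]
    refine lintegral_congr_ae ?_
    filter_upwards [Measure.rnDeriv_ne_top ν μ] with x hx
    rw [hEnt, if_neg hx]
  have hh_meas : Measurable (fun x => ρ x * (Real.log (ρ x) - 1) + 1) :=
    ((hρ_meas.mul ((Real.measurable_log.comp hρ_meas).sub measurable_const)).add measurable_const)
  have hh_nonneg : ∀ x, 0 ≤ ρ x * (Real.log (ρ x) - 1) + 1 := fun x => dv_hent_nonneg (hρ_nonneg x)
  have hh_int : Integrable (fun x => ρ x * (Real.log (ρ x) - 1) + 1) μ := by
    refine ⟨hh_meas.aestronglyMeasurable, ?_⟩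
    rw [hasFiniteIntegral_iff_ofReal (Filter.Eventually.of_forall hh_nonneg)]
    rw [← hT_eq]
    exact lt_of_le_of_ne le_top hT
  have hh_val : ∫ x, (ρ x * (Real.log (ρ x) - 1) + 1) ∂μ = T.toReal := by
    have := MeasureTheory.ofReal_integral_eq_lintegral_ofReal hh_int
      (Filter.Eventually.of_forall hh_nonneg)
    rw [← hT_eq] at this
    rw [← this, ENNReal.toReal_ofReal (integral_nonneg hh_nonneg)]
  refine iSup_le fun φ => ?_
  -- facts about φ
  have hφ_int_ν : Integrable (fun x => φ x) ν := φ.integrable ν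
  have hexp_meas : Measurable (fun x => Real.exp (φ x)) :=
    (Real.continuous_exp.comp φ.continuous).measurable
  have hφ_bdd : ∀ x, |φ x| ≤ ‖φ‖ := fun x => by
    have := φ.norm_coe_le_norm x
    rwa [Real.norm_eq_abs] at this
  have hexp_bdd : ∀ x, Real.exp (φ x) ≤ Real.exp ‖φ‖ :=
    fun x => Real.exp_le_exp.2 ((le_abs_self _).trans (hφ_bdd x))
  have hexp_int : Integrable (fun x => Real.exp (φ x)) μ := by
    refine ⟨hexp_meas.aestronglyMeasurable, HasFiniteIntegral.of_bounded
      (C := Real.exp ‖φ‖) (Filter.Eventually.of_forall fun x => ?_)⟩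
    rw [Real.norm_eq_abs, abs_of_nonneg (Real.exp_nonneg _)]
    exact hexp_bdd x
  set Z : ℝ := ∫ x, Real.exp (φ x) ∂μ with hZdef
  have hZ_pos : 0 < Z := by
    have h1 : ∫ x, Real.exp (-‖φ‖) ∂μ ≤ Z :=
      integral_mono (integrable_const _) hexp_int
        (fun x => Real.exp_le_exp.2 ((neg_le.1 ((abs_le.1 (hφ_bdd x)).1.trans_eq rfl)).trans_eq rfl |>.trans (le_refl _) |> fun h => (abs_le.1 (hφ_bdd x)).1))
    have h2 : ∫ x, Real.exp (-‖φ‖) ∂μ = Real.exp (-‖φ‖) := by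
      simp [measure_univ]
    rw [h2] at h1
    exact lt_of_lt_of_le (Real.exp_pos _) h1
  -- key pointwise inequality integrated
  have key : ∀ x, ρ x * (φ x - Real.log Z) ≤
      (ρ x * (Real.log (ρ x) - 1) + 1) + (Real.exp (φ x) / Z - 1) := by
    intro x
    have := dv_young (t := ρ x) (u := φ x - Real.log Z) (hρ_nonneg x)
    rwa [Real.exp_sub, Real.exp_log hZ_pos] at this
  have hρφ_int : Integrable (fun x => ρ x * φ x) μ := by
    have := hρ_int.bdd_mul (c := ‖φ‖) φ.continuous.measurable.aestronglyMeasurable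
      (Filter.Eventually.of_forall fun x => by rw [Real.norm_eq_abs]; exact hφ_bdd x)
    simpa [mul_comm] using this
  have hLHS_int : Integrable (fun x => ρ x * (φ x - Real.log Z)) μ := by
    have : (fun x => ρ x * (φ x - Real.log Z)) =
        fun x => ρ x * φ x - Real.log Z * ρ x := by ext x; ring
    rw [this]
    exact hρφ_int.sub (hρ_int.const_mul _)
  have hsub_int : Integrable (fun x => Real.exp (φ x) / Z - 1) μ := by
    have := (hexp_int.div_const Z).sub (integrable_const 1)
    exact this
  have hRHS_int : Integrable (fun x =>
      (ρ x * (Real.log (ρ x) - 1) + 1) + (Real.exp (φ x) / Z - 1)) μ :=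
    hh_int.add hsub_int
  have hint_le := integral_mono hLHS_int hRHS_int key
  have hLHS_val : ∫ x, ρ x * (φ x - Real.log Z) ∂μ = (∫ x, φ x ∂ν) - Real.log Z := by
    have h1 : (fun x => ρ x * (φ x - Real.log Z)) =
        fun x => ρ x * φ x - Real.log Z * ρ x := by ext x; ring
    rw [h1, integral_sub hρφ_int (hρ_int.const_mul _), integral_const_mul, hρ_int1]
    have h2 : ∫ x, ρ x * φ x ∂μ = ∫ x, φ x ∂ν := by
      have := MeasureTheory.integral_rnDeriv_smul hAC (f := fun x => φ x)
      simpa [smul_eq_mul] using this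
    rw [h2, mul_one]
  have hRHS_val : ∫ x, ((ρ x * (Real.log (ρ x) - 1) + 1) + (Real.exp (φ x) / Z - 1)) ∂μ
      = T.toReal := by
    rw [integral_add hh_int hsub_int, hh_val]
    have h9 : ∫ x, (Real.exp (φ x) / Z - 1) ∂μ = 0 := by
      rw [integral_sub (hexp_int.div_const Z) (integrable_const 1), integral_div, ← hZdef,
        div_self hZ_pos.ne']
      simp [measure_univ]
    rw [h9, add_zero]
  rw [hLHS_val, hRHS_val] at hint_le
  calc ENNReal.ofReal ((∫ x, φ x ∂ν) - Real.log Z) ≤ ENNReal.ofReal T.toReal :=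
        ENNReal.ofReal_le_ofReal hint_le
    _ = T := ENNReal.ofReal_toReal hT


open BoundedContinuousFunction in
lemma dv_key_approx {X : Type*} [MetricSpace X] [MeasurableSpace X] [BorelSpace X]
    (ν μ : Measure X) [IsProbabilityMeasure ν] [IsProbabilityMeasure μ]
    {g : X → ℝ} (hg : Measurable g) {c : ℝ} (hc : 0 ≤ c) (hgb : ∀ x, |g x| ≤ c) :
    ENNReal.ofReal (∫ x, g x ∂ν - Real.log (∫ x, Real.exp (g x) ∂μ)) ≤ relEntVar ν μ := by
  by_cases htop : relEntVar ν μ = ⊤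
  · simp [htop]
  -- it suffices to bound by relEntVar + δ for every δ > 0
  refine ENNReal.le_of_forall_pos_le_add fun δ hδ _ => ?_
  set κ : Measure X := μ + ν with hκ
  haveI : IsFiniteMeasure κ := by rw [hκ]; infer_instance
  set ε : ℝ := (δ : ℝ) / (1 + Real.exp (2 * c)) with hε
  have hεpos : 0 < ε := by
    apply div_pos (by exact_mod_cast hδ)
    positivity
  have hg_int_κ : Integrable g κ := by
    refine ⟨hg.aestronglyMeasurable, HasFiniteIntegral.of_bounded
      (C := c) (Filter.Eventually.of_forall fun x => by
        rw [Real.norm_eq_abs]; exact hgb x)⟩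
  obtain ⟨φ₀, hφ₀, -⟩ := hg_int_κ.exists_boundedContinuous_integral_sub_le hεpos
  -- clamp φ₀ to [-c, c]
  set ψ : X →ᵇ ℝ := BoundedContinuousFunction.ofNormedAddCommGroup
    (fun x => max (-c) (min c (φ₀ x)))
    (Continuous.max continuous_const (Continuous.min continuous_const φ₀.continuous)) c
    (fun x => by
      rw [Real.norm_eq_abs, abs_le]
      refine ⟨le_max_left _ _, max_le (by linarith) (min_le_left _ _)⟩) with hψ
  have hψval : ∀ x, ψ x = max (-c) (min c (φ₀ x)) := fun x => rfl
  have hψb : ∀ x, |ψ x| ≤ c := fun x => by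
    rw [hψval, abs_le]
    exact ⟨le_max_left _ _, max_le (by linarith) (min_le_left _ _)⟩
  have hψg : ∀ x, |ψ x - g x| ≤ |φ₀ x - g x| := fun x => by
    rw [hψval]
    exact dv_clamp_dist (abs_le.1 (hgb x)).1 (abs_le.1 (hgb x)).2
  -- integrability facts
  have bdd_int : ∀ (m : Measure X) [IsFiniteMeasure m] (f : X → ℝ), Measurable f →
      ∀ (C : ℝ), (∀ x, |f x| ≤ C) → Integrable f m := by
    intro m _ f hf C hC
    exact ⟨hf.aestronglyMeasurable, HasFiniteIntegral.of_bounded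
      (C := C) (Filter.Eventually.of_forall fun x => by rw [Real.norm_eq_abs]; exact hC x)⟩
  have hψ_meas : Measurable (fun x => ψ x) := ψ.continuous.measurable
  have hg_int_ν : Integrable g ν := bdd_int ν g hg c hgb
  have hψ_int_ν : Integrable (fun x => ψ x) ν := bdd_int ν _ hψ_meas c hψb
  have heg_int : Integrable (fun x => Real.exp (g x)) μ :=
    bdd_int μ _ (Real.measurable_exp.comp hg) (Real.exp c)
      (fun x => by rw [abs_of_nonneg (Real.exp_nonneg _)]
                   exact Real.exp_le_exp.2 (abs_le.1 (hgb x)).2)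
  have heψ_int : Integrable (fun x => Real.exp (ψ x)) μ :=
    bdd_int μ _ (Real.measurable_exp.comp hψ_meas) (Real.exp c)
      (fun x => by rw [abs_of_nonneg (Real.exp_nonneg _)]
                   exact Real.exp_le_exp.2 (abs_le.1 (hψb x)).2)
  have hdiff_int_κ : Integrable (fun x => ‖g x - φ₀ x‖) κ := (hg_int_κ.sub (φ₀.integrable κ)).norm
  have hdiff_int_ν : Integrable (fun x => ‖g x - φ₀ x‖) ν := by
    rw [hκ, integrable_add_measure] at hdiff_int_κ
    exact hdiff_int_κ.2
  have hdiff_int_μ : Integrable (fun x => ‖g x - φ₀ x‖) μ := by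
    rw [hκ, integrable_add_measure] at hdiff_int_κ
    exact hdiff_int_κ.1
  -- bound ∫ |ψ - g| over ν and μ by ε
  have hbound : ∀ (m : Measure X) [IsProbabilityMeasure m],
      Integrable (fun x => ‖g x - φ₀ x‖) m →
      (∫ x, ‖g x - φ₀ x‖ ∂m ≤ ∫ x, ‖g x - φ₀ x‖ ∂κ) → ∫ x, |ψ x - g x| ∂m ≤ ε := by
    intro m _ hint hle
    calc ∫ x, |ψ x - g x| ∂m ≤ ∫ x, ‖g x - φ₀ x‖ ∂m := by
          refine integral_mono (bdd_int m _ ((hψ_meas.sub hg).abs) (2 * c)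
            (fun x => by
              rw [abs_abs]
              calc |ψ x - g x| ≤ |ψ x| + |g x| := abs_sub _ _
                _ ≤ 2 * c := by have := hψb x; have := hgb x; linarith)) hint
            (fun x => by
              rw [Real.norm_eq_abs, abs_sub_comm (g x)]
              exact hψg x)
      _ ≤ ∫ x, ‖g x - φ₀ x‖ ∂κ := hle
      _ ≤ ε := hφ₀
  have hle_ν : ∫ x, ‖g x - φ₀ x‖ ∂ν ≤ ∫ x, ‖g x - φ₀ x‖ ∂κ := by
    rw [hκ, integral_add_measure hdiff_int_μ hdiff_int_ν]
    have : 0 ≤ ∫ x, ‖g x - φ₀ x‖ ∂μ := integral_nonneg fun x => norm_nonneg _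
    linarith
  have hle_μ : ∫ x, ‖g x - φ₀ x‖ ∂μ ≤ ∫ x, ‖g x - φ₀ x‖ ∂κ := by
    rw [hκ, integral_add_measure hdiff_int_μ hdiff_int_ν]
    have : 0 ≤ ∫ x, ‖g x - φ₀ x‖ ∂ν := integral_nonneg fun x => norm_nonneg _
    linarith
  have hb_ν : ∫ x, |ψ x - g x| ∂ν ≤ ε := hbound ν hdiff_int_ν hle_ν
  have hb_μ : ∫ x, |ψ x - g x| ∂μ ≤ ε := hbound μ hdiff_int_μ hle_μ
  have habsdiff_int : ∀ (m : Measure X) [IsProbabilityMeasure m],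
      Integrable (fun x => |ψ x - g x|) m := fun m _ =>
    bdd_int m _ ((hψ_meas.sub hg).abs) (2 * c)
      (fun x => by
        rw [abs_abs]
        calc |ψ x - g x| ≤ |ψ x| + |g x| := abs_sub _ _
          _ ≤ 2 * c := by have := hψb x; have := hgb x; linarith)
  -- step 1 : ν-integrals are close
  have h1 : |∫ x, ψ x ∂ν - ∫ x, g x ∂ν| ≤ ε := by
    rw [← integral_sub hψ_int_ν hg_int_ν]
    calc |∫ x, (ψ x - g x) ∂ν| ≤ ∫ x, |ψ x - g x| ∂ν := by
          simpa [Real.norm_eq_abs] using norm_integral_le_integral_norm (fun x => ψ x - g x) (μ := ν)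
      _ ≤ ε := hb_ν
  -- step 2 : exp-integrals are close
  have h2 : |∫ x, Real.exp (ψ x) ∂μ - ∫ x, Real.exp (g x) ∂μ| ≤ Real.exp c * ε := by
    rw [← integral_sub heψ_int heg_int]
    refine le_trans (by
      simpa [Real.norm_eq_abs] using norm_integral_le_integral_norm
        (fun x => Real.exp (ψ x) - Real.exp (g x)) (μ := μ)) ?_
    calc ∫ x, |Real.exp (ψ x) - Real.exp (g x)| ∂μ
        ≤ ∫ x, Real.exp c * |ψ x - g x| ∂μ := by
          refine integral_mono ((heψ_int.sub heg_int).abs) ((habsdiff_int μ).const_mul _)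
            (fun x => dv_exp_lip (abs_le.1 (hψb x)).2 (abs_le.1 (hgb x)).2)
      _ = Real.exp c * ∫ x, |ψ x - g x| ∂μ := integral_const_mul _ _
      _ ≤ Real.exp c * ε := by
          exact mul_le_mul_of_nonneg_left hb_μ (Real.exp_nonneg c)
  -- step 3 : lower bounds on exp-integrals
  have h3 : ∀ (f : X → ℝ), Measurable f → (∀ x, |f x| ≤ c) →
      Real.exp (-c) ≤ ∫ x, Real.exp (f x) ∂μ := by
    intro f hf hfb
    have : ∫ x, Real.exp (-c) ∂μ ≤ ∫ x, Real.exp (f x) ∂μ :=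
      integral_mono (integrable_const _)
        (bdd_int μ _ (Real.measurable_exp.comp hf) (Real.exp c)
          (fun x => by rw [abs_of_nonneg (Real.exp_nonneg _)]
                       exact Real.exp_le_exp.2 (abs_le.1 (hfb x)).2))
        (fun x => Real.exp_le_exp.2 (abs_le.1 (hfb x)).1)
    simpa [measure_univ] using this
  have h3g := h3 g hg hgb
  have h3ψ := h3 _ hψ_meas hψb
  -- step 4 : logs are close
  have h4 : |Real.log (∫ x, Real.exp (ψ x) ∂μ) - Real.log (∫ x, Real.exp (g x) ∂μ)|
      ≤ Real.exp c * (Real.exp c * ε) :=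
    (dv_log_lip h3ψ h3g).trans (mul_le_mul_of_nonneg_left h2 (Real.exp_nonneg c))
  -- combine
  have hcomb : ∫ x, g x ∂ν - Real.log (∫ x, Real.exp (g x) ∂μ)
      ≤ (∫ x, ψ x ∂ν - Real.log (∫ x, Real.exp (ψ x) ∂μ)) + (1 + Real.exp (2 * c)) * ε := by
    have e1 := (abs_le.1 h1).1
    have e2 := (abs_le.1 h4).2
    have e3 : Real.exp c * (Real.exp c * ε) = Real.exp (2 * c) * ε := by
      rw [← mul_assoc, ← Real.exp_add]; ring_nf
    rw [e3] at e2
    nlinarith [hεpos.le]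
  have hεδ : (1 + Real.exp (2 * c)) * ε = (δ : ℝ) := by
    rw [hε, mul_div_cancel₀]
    positivity
  calc ENNReal.ofReal (∫ x, g x ∂ν - Real.log (∫ x, Real.exp (g x) ∂μ))
      ≤ ENNReal.ofReal ((∫ x, ψ x ∂ν - Real.log (∫ x, Real.exp (ψ x) ∂μ))
          + (1 + Real.exp (2 * c)) * ε) := ENNReal.ofReal_le_ofReal hcomb
    _ ≤ ENNReal.ofReal (∫ x, ψ x ∂ν - Real.log (∫ x, Real.exp (ψ x) ∂μ))
          + ENNReal.ofReal ((1 + Real.exp (2 * c)) * ε) := ENNReal.ofReal_add_le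
    _ ≤ relEntVar ν μ + (δ : ℝ≥0∞) := by
        refine add_le_add (le_iSup (fun φ : X →ᵇ ℝ =>
          ENNReal.ofReal (∫ x, φ x ∂ν - Real.log (∫ x, Real.exp (φ x) ∂μ))) ψ) ?_
        rw [hεδ]
        simp


lemma dv_lintegral_hEnt_le {X : Type*} [MetricSpace X] [MeasurableSpace X] [BorelSpace X]
    (ν μ : Measure X) [IsProbabilityMeasure ν] [IsProbabilityMeasure μ] (hAC : ν ≪ μ) :
    ∫⁻ x, hEnt (ν.rnDeriv μ x) ∂μ ≤ relEntVar ν μ := by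
  set S := relEntVar ν μ with hSdef
  set T := ∫⁻ x, hEnt (ν.rnDeriv μ x) ∂μ with hTdef
  set ρ : X → ℝ := fun x => (ν.rnDeriv μ x).toReal with hρdef
  have hρ_meas : Measurable ρ := (Measure.measurable_rnDeriv ν μ).ennreal_toReal
  have hρ_nonneg : ∀ x, 0 ≤ ρ x := fun x => ENNReal.toReal_nonneg
  have hρ_int : Integrable ρ μ := Measure.integrable_toReal_rnDeriv
  have hρ_int1 : ∫ x, ρ x ∂μ = 1 := by
    rw [hρdef, Measure.integral_toReal_rnDeriv hAC]; simp
  set L : X → ℝ := fun x => ρ x * Real.log (ρ x) with hLdef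
  have hL_meas : Measurable L := hρ_meas.mul (Real.measurable_log.comp hρ_meas)
  have hL_ge : ∀ x, -(Real.exp 1)⁻¹ ≤ L x := fun x => dv_mul_log_ge (hρ_nonneg x)
  have hT_eq : T = ∫⁻ x, ENNReal.ofReal (L x - ρ x + 1) ∂μ := by
    rw [hTdef]
    refine lintegral_congr_ae ?_
    filter_upwards [Measure.rnDeriv_ne_top ν μ] with x hx
    rw [hEnt, if_neg hx]
    congr 1
    rw [hLdef]; ring
  -- the truncated log-density
  set clamp : ℕ → X → ℝ := fun n x =>
    max (Real.exp (-(n : ℝ))) (min (Real.exp (n : ℝ)) (ρ x)) with hclamp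
  have hclamp_pos : ∀ n x, 0 < clamp n x :=
    fun n x => lt_of_lt_of_le (Real.exp_pos _) (le_max_left _ _)
  have hclamp_meas : ∀ n, Measurable (clamp n) :=
    fun n => measurable_const.max (measurable_const.min hρ_meas)
  set g : ℕ → X → ℝ := fun n x => Real.log (clamp n x) with hgdef
  have hg_meas : ∀ n, Measurable (g n) := fun n => Real.measurable_log.comp (hclamp_meas n)
  have hnn : ∀ n : ℕ, -(n : ℝ) ≤ (n : ℝ) := fun n => by
    have : (0:ℝ) ≤ (n:ℝ) := Nat.cast_nonneg n
    linarith
  have hg_bdd : ∀ n x, |g n x| ≤ (n : ℝ) := by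
    intro n x
    rw [abs_le]
    constructor
    · have : Real.exp (-(n : ℝ)) ≤ clamp n x := le_max_left _ _
      have := Real.log_le_log (Real.exp_pos _) this
      rwa [Real.log_exp] at this
    · have h1 : clamp n x ≤ Real.exp (n : ℝ) := by
        refine max_le (Real.exp_le_exp.2 (hnn n)) (min_le_left _ _)
      have := Real.log_le_log (hclamp_pos n x) h1
      rwa [Real.log_exp] at this
  have hexp_g : ∀ n x, Real.exp (g n x) = clamp n x :=
    fun n x => Real.exp_log (hclamp_pos n x)
  set f : ℕ → X → ℝ := fun n x => ρ x * g n x with hfdef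
  -- (a) upper bound f ≤ max L 0
  have hf_le : ∀ n x, f n x ≤ max (L x) 0 := by
    intro n x
    rcases (hρ_nonneg x).eq_or_lt with h0 | h0
    · simp [hfdef, ← h0]
    rcases le_total 1 (ρ x) with h1 | h1
    · have hc1 : clamp n x ≤ ρ x := by
        refine max_le (le_trans (Real.exp_le_one_iff.2 (by simp)) h1) (min_le_right _ _)
      have hg1 : g n x ≤ Real.log (ρ x) := Real.log_le_log (hclamp_pos n x) hc1
      have : f n x ≤ L x := mul_le_mul_of_nonneg_left hg1 (hρ_nonneg x)
      exact le_trans this (le_max_left _ _)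
    · have hc1 : clamp n x ≤ 1 := by
        refine max_le (Real.exp_le_one_iff.2 (by simp)) (le_trans (min_le_right _ _) h1)
      have hg1 : g n x ≤ 0 := Real.log_nonpos (hclamp_pos n x).le hc1
      have : f n x ≤ 0 := mul_nonpos_of_nonneg_of_nonpos (hρ_nonneg x) hg1
      exact le_trans this (le_max_right _ _)
  -- (b) lower bound f ≥ -1/e
  have hf_ge : ∀ n x, -(Real.exp 1)⁻¹ ≤ f n x := by
    intro n x
    rcases le_total (ρ x) (Real.exp (-(n : ℝ))) with h1 | h1
    · have hc1 : clamp n x = Real.exp (-(n : ℝ)) := by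
        simp only [hclamp]
        rw [min_eq_right (h1.trans (Real.exp_le_exp.2 (hnn n))), max_eq_left h1]
      have hgv : g n x = -(n : ℝ) := by rw [hgdef]; simp only [hc1, Real.log_exp]
      rw [hfdef]; simp only [hgv]
      have hne : (n : ℝ) ≤ Real.exp ((n : ℝ) - 1) := by
        have := Real.add_one_le_exp ((n : ℝ) - 1); linarith
      have h2 : ρ x * (n : ℝ) ≤ Real.exp (-(n : ℝ)) * (n : ℝ) :=
        mul_le_mul_of_nonneg_right h1 (Nat.cast_nonneg n)
      have h3 : Real.exp (-(n : ℝ)) * (n : ℝ) ≤ Real.exp (-(n : ℝ)) * Real.exp ((n : ℝ) - 1) :=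
        mul_le_mul_of_nonneg_left hne (Real.exp_nonneg _)
      have h4 : Real.exp (-(n : ℝ)) * Real.exp ((n : ℝ) - 1) = (Real.exp 1)⁻¹ := by
        rw [← Real.exp_add, ← Real.exp_neg]; ring_nf
      nlinarith
    rcases le_total (ρ x) (Real.exp (n : ℝ)) with h2 | h2
    · have hc1 : clamp n x = ρ x := by
        simp only [hclamp]
        rw [min_eq_right h2, max_eq_right h1]
      have : f n x = L x := by rw [hfdef, hgdef, hLdef]; simp only [hc1]
      rw [this]; exact hL_ge x
    · have hc1 : clamp n x = Real.exp (n : ℝ) := by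
        simp only [hclamp]
        rw [min_eq_left h2, max_eq_right (Real.exp_le_exp.2 (hnn n))]
      have hgv : g n x = (n : ℝ) := by rw [hgdef]; simp only [hc1, Real.log_exp]
      have : 0 ≤ f n x := by
        rw [hfdef]; simp only [hgv]
        exact mul_nonneg (hρ_nonneg x) (Nat.cast_nonneg n)
      calc -(Real.exp 1)⁻¹ ≤ 0 := by
            have := Real.exp_pos 1
            simp only [neg_nonpos]
            positivity
        _ ≤ f n x := this
  -- (c) pointwise convergence f n x → L x
  have hf_tendsto : ∀ x, Tendsto (fun n => f n x) atTop (𝓝 (L x)) := by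
    intro x
    rcases (hρ_nonneg x).eq_or_lt with h0 | h0
    · have : ∀ n, f n x = 0 := fun n => by rw [hfdef]; simp [← h0]
      have hL0 : L x = 0 := by rw [hLdef]; simp [← h0]
      simp only [this, hL0]
      exact tendsto_const_nhds
    · have hev : ∀ᶠ n in atTop, f n x = L x := by
        rw [eventually_atTop]
        refine ⟨⌈|Real.log (ρ x)|⌉₊, fun n hn => ?_⟩
        have hn' : |Real.log (ρ x)| ≤ (n : ℝ) := (Nat.ceil_le.1 hn)
        have habs := abs_le.1 hn'
        have h1 : Real.exp (-(n : ℝ)) ≤ ρ x := by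
          have := Real.exp_le_exp.2 (neg_le.2 (neg_le.1 habs.1))
          rwa [Real.exp_log h0] at this
        have h2 : ρ x ≤ Real.exp (n : ℝ) := by
          have := Real.exp_le_exp.2 habs.2
          rwa [Real.exp_log h0] at this
        have hc1 : clamp n x = ρ x := by
          simp only [hclamp]; rw [min_eq_right h2, max_eq_right h1]
        rw [hfdef, hgdef, hLdef]; simp only [hc1]
      exact Tendsto.congr' (by filter_upwards [hev] with n h using h.symm) tendsto_const_nhds
  have hf_meas : ∀ n, Measurable (f n) := fun n => hρ_meas.mul (hg_meas n)
  have hf_int : ∀ n, Integrable (f n) μ := by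
    intro n
    have := hρ_int.bdd_mul (c := (n : ℝ)) ((hg_meas n).aestronglyMeasurable)
      (Filter.Eventually.of_forall fun x => by rw [Real.norm_eq_abs]; exact hg_bdd n x)
    simpa [hfdef, mul_comm] using this
  have hint_eq : ∀ n, ∫ x, g n x ∂ν = ∫ x, f n x ∂μ := by
    intro n
    have := MeasureTheory.integral_rnDeriv_smul hAC (f := g n)
    rw [hfdef]
    simp only [smul_eq_mul] at this
    exact this.symm
  have bdd_int : ∀ (m : Measure X) [IsFiniteMeasure m] (h : X → ℝ), Measurable h →
      ∀ (C : ℝ), (∀ x, |h x| ≤ C) → Integrable h m := by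
    intro m _ h hh C hC
    exact ⟨hh.aestronglyMeasurable, HasFiniteIntegral.of_bounded
      (C := C) (Filter.Eventually.of_forall fun x => by rw [Real.norm_eq_abs]; exact hC x)⟩
  have hexpg_int : ∀ n, Integrable (fun x => Real.exp (g n x)) μ := by
    intro n
    refine bdd_int μ _ (Real.measurable_exp.comp (hg_meas n)) (Real.exp (n : ℝ)) fun x => ?_
    rw [abs_of_nonneg (Real.exp_nonneg _)]
    exact Real.exp_le_exp.2 (abs_le.1 (hg_bdd n x)).2
  have hZ_le : ∀ n, ∫ x, Real.exp (g n x) ∂μ ≤ 1 + Real.exp (-(n : ℝ)) := by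
    intro n
    have hpt : ∀ x, Real.exp (g n x) ≤ ρ x + Real.exp (-(n : ℝ)) := by
      intro x
      rw [hexp_g n x]
      simp only [hclamp]
      refine max_le (by
        have := hρ_nonneg x; linarith) ?_
      have := Real.exp_pos (-(n : ℝ))
      have := min_le_right (Real.exp (n : ℝ)) (ρ x)
      linarith
    have hsum_int : Integrable (fun x => ρ x + Real.exp (-(n : ℝ))) μ :=
      hρ_int.add (integrable_const _)
    have h15 := integral_mono (f := fun x => Real.exp (g n x))
      (g := fun x => ρ x + Real.exp (-(n : ℝ))) (hexpg_int n) hsum_int hpt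
    have h16 : ∫ x, (ρ x + Real.exp (-(n : ℝ))) ∂μ = 1 + Real.exp (-(n : ℝ)) := by
      rw [integral_add hρ_int (integrable_const _), hρ_int1, integral_const, probReal_univ, one_smul]
    rw [h16] at h15
    exact h15
  have hZ_pos : ∀ n, 0 < ∫ x, Real.exp (g n x) ∂μ := by
    intro n
    have hpt : ∀ x, Real.exp (-(n : ℝ)) ≤ Real.exp (g n x) := by
      intro x
      rw [hexp_g n x]
      exact le_max_left _ _
    have := integral_mono (integrable_const _) (hexpg_int n) hpt
    rw [integral_const, probReal_univ, one_smul] at this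
    exact lt_of_lt_of_le (Real.exp_pos _) this
  have hlog_le : ∀ n, Real.log (∫ x, Real.exp (g n x) ∂μ) ≤ Real.exp (-(n : ℝ)) := by
    intro n
    have h1 : Real.log (∫ x, Real.exp (g n x) ∂μ) ≤ Real.log (1 + Real.exp (-(n : ℝ))) :=
      Real.log_le_log (hZ_pos n) (hZ_le n)
    have h2 : Real.log (1 + Real.exp (-(n : ℝ))) ≤ (1 + Real.exp (-(n : ℝ))) - 1 :=
      Real.log_le_sub_one_of_pos (by positivity)
    linarith
  have hterm : ∀ n, ENNReal.ofReal (∫ x, f n x ∂μ - Real.exp (-(n : ℝ))) ≤ S := by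
    intro n
    refine le_trans (ENNReal.ofReal_le_ofReal ?_)
      (dv_key_approx ν μ (hg_meas n) (Nat.cast_nonneg n) (hg_bdd n))
    rw [← hint_eq n]
    have := hlog_le n
    linarith
  set P := ∫⁻ x, ENNReal.ofReal (max (L x) 0) ∂μ with hPdef
  by_cases hP : P = ⊤
  · -- infinite entropy case : show S = ⊤
    by_contra hcon
    push_neg at hcon
    have hS_ne : S ≠ ⊤ := hcon.ne_top
    have hfn_ub : ∀ n, ∫ x, f n x ∂μ ≤ S.toReal + 1 := by
      intro n
      by_contra hgt
      push_neg at hgt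
      have hST : S.toReal < ∫ x, f n x ∂μ - Real.exp (-(n : ℝ)) := by
        have h1 : Real.exp (-(n : ℝ)) ≤ 1 := Real.exp_le_one_iff.2 (by
          have : (0:ℝ) ≤ (n:ℝ) := Nat.cast_nonneg n
          linarith)
        linarith
      have h2 : S < ENNReal.ofReal (∫ x, f n x ∂μ - Real.exp (-(n : ℝ))) := by
        rw [← ENNReal.ofReal_toReal hS_ne]
        exact (ENNReal.ofReal_lt_ofReal_iff (lt_of_le_of_lt ENNReal.toReal_nonneg hST)).2 hST
      exact absurd (hterm n) h2.not_ge
    have hup : ∀ n, ∫⁻ x, ENNReal.ofReal (f n x + (Real.exp 1)⁻¹) ∂μ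
        ≤ ENNReal.ofReal (S.toReal + 2) := by
      intro n
      have hint : Integrable (fun x => f n x + (Real.exp 1)⁻¹) μ :=
        (hf_int n).add (integrable_const _)
      rw [← ofReal_integral_eq_lintegral_ofReal hint
        (Filter.Eventually.of_forall fun x => by
          have := hf_ge n x
          show (0:ℝ) ≤ f n x + (Real.exp 1)⁻¹
          linarith)]
      apply ENNReal.ofReal_le_ofReal
      rw [integral_add (hf_int n) (integrable_const _), integral_const, probReal_univ, one_smul]
      have he1 : (Real.exp 1)⁻¹ ≤ 1 := by
        have h9 : (0:ℝ) < Real.exp 1 := Real.exp_pos 1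
        have h10 := Real.add_one_le_exp (1:ℝ)
        have h11 : (Real.exp 1)⁻¹ * Real.exp 1 = 1 := inv_mul_cancel₀ (ne_of_gt h9)
        have h12 : (0:ℝ) < (Real.exp 1)⁻¹ := by positivity
        nlinarith
      linarith [hfn_ub n]
    have hfatou : ∫⁻ x, ENNReal.ofReal (L x + (Real.exp 1)⁻¹) ∂μ
        ≤ ENNReal.ofReal (S.toReal + 2) := by
      have h1 : ∫⁻ x, ENNReal.ofReal (L x + (Real.exp 1)⁻¹) ∂μ
          ≤ liminf (fun n => ∫⁻ x, ENNReal.ofReal (f n x + (Real.exp 1)⁻¹) ∂μ) atTop := by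
        have h2 := lintegral_liminf_le (μ := μ) (u := atTop)
          (f := fun n x => ENNReal.ofReal (f n x + (Real.exp 1)⁻¹))
          (fun n => ((hf_meas n).add measurable_const).ennreal_ofReal)
        refine le_trans (le_of_eq (lintegral_congr fun x => ?_)) h2
        have h3 : Tendsto (fun n => ENNReal.ofReal (f n x + (Real.exp 1)⁻¹)) atTop
            (𝓝 (ENNReal.ofReal (L x + (Real.exp 1)⁻¹))) :=
          (ENNReal.continuous_ofReal.tendsto _).comp ((hf_tendsto x).add tendsto_const_nhds)
        exact h3.liminf_eq.symm
      refine h1.trans (liminf_le_of_le (by isBoundedDefault) ?_)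
      intro b hb
      obtain ⟨n, hn⟩ := (hb.and (Filter.eventually_atTop.2 ⟨0, fun m _ => hup m⟩)).exists
      exact hn.1.trans hn.2
    have hPle : P ≤ ∫⁻ x, ENNReal.ofReal (L x + (Real.exp 1)⁻¹) ∂μ := by
      refine lintegral_mono fun x => ENNReal.ofReal_le_ofReal ?_
      have h4 := hL_ge x
      have h5 : (0:ℝ) < (Real.exp 1)⁻¹ := by positivity
      exact max_le (by linarith) (by linarith)
    rw [hP] at hPle
    exact absurd (hPle.trans hfatou) (by simp)
  · -- finite entropy case
    have hp_meas : Measurable (fun x => max (L x) 0) := hL_meas.max measurable_const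
    have hp_int : Integrable (fun x => max (L x) 0) μ := by
      refine ⟨hp_meas.aestronglyMeasurable, ?_⟩
      refine (hasFiniteIntegral_iff_ofReal (f := fun x => max (L x) 0)
        (Filter.Eventually.of_forall fun x => le_max_right _ _)).2 ?_
      exact lt_of_le_of_ne le_top hP
    have hq_int : Integrable (fun x => max (-L x) 0) μ := by
      refine bdd_int μ _ ((hL_meas.neg).max measurable_const) ((Real.exp 1)⁻¹) fun x => ?_
      rw [abs_of_nonneg (le_max_right _ _)]
      have h4 := hL_ge x
      have h5 : (0:ℝ) < (Real.exp 1)⁻¹ := by positivity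
      exact max_le (by linarith) (by linarith)
    have hL_int : Integrable L μ := by
      have hLeq : L = fun x => max (L x) 0 - max (-L x) 0 := by
        ext x
        exact (max_zero_sub_max_neg_zero_eq_self (L x)).symm
      rw [hLeq]
      exact hp_int.sub hq_int
    have hbound_int : Integrable (fun x => max (L x) 0 + (Real.exp 1)⁻¹) μ :=
      hp_int.add (integrable_const _)
    have hDCT : Tendsto (fun n => ∫ x, f n x ∂μ) atTop (𝓝 (∫ x, L x ∂μ)) := by
      refine tendsto_integral_of_dominated_convergence _
        (fun n => (hf_meas n).aestronglyMeasurable) hbound_int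
        (fun n => Filter.Eventually.of_forall fun x => ?_)
        (Filter.Eventually.of_forall hf_tendsto)
      rw [Real.norm_eq_abs, abs_le]
      have h4 := hf_ge n x
      have h5 := hf_le n x
      have h6 : (0:ℝ) ≤ max (L x) 0 := le_max_right _ _
      have h7 : (0:ℝ) < (Real.exp 1)⁻¹ := by positivity
      constructor <;> linarith
    have hexp0 : Tendsto (fun n : ℕ => Real.exp (-(n : ℝ))) atTop (𝓝 0) :=
      Real.tendsto_exp_neg_atTop_nhds_zero.comp tendsto_natCast_atTop_atTop
    have hTendsto2 : Tendsto (fun n => ∫ x, f n x ∂μ - Real.exp (-(n : ℝ))) atTop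
        (𝓝 (∫ x, L x ∂μ)) := by
      have := hDCT.sub hexp0
      simpa using this
    have hofReal : Tendsto (fun n => ENNReal.ofReal (∫ x, f n x ∂μ - Real.exp (-(n : ℝ)))) atTop
        (𝓝 (ENNReal.ofReal (∫ x, L x ∂μ))) :=
      (ENNReal.continuous_ofReal.tendsto _).comp hTendsto2
    have hle : ENNReal.ofReal (∫ x, L x ∂μ) ≤ S := le_of_tendsto' hofReal hterm
    have hh_int : Integrable (fun x => L x - ρ x + 1) μ :=
      (hL_int.sub hρ_int).add (integrable_const 1)
    have hh_nonneg : ∀ x, 0 ≤ L x - ρ x + 1 := by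
      intro x
      have h := dv_hent_nonneg (hρ_nonneg x)
      have h8 : L x - ρ x + 1 = ρ x * (Real.log (ρ x) - 1) + 1 := by
        simp only [hLdef]; ring
      rw [h8]
      exact h
    have hT_val : T = ENNReal.ofReal (∫ x, L x ∂μ) := by
      rw [hT_eq, ← ofReal_integral_eq_lintegral_ofReal hh_int
        (Filter.Eventually.of_forall hh_nonneg)]
      congr 1
      have e1 : ∀ x, L x - ρ x + 1 = L x - (ρ x - 1) := fun x => by ring
      simp_rw [e1]
      have h13 : Integrable (fun x => ρ x - 1) μ := hρ_int.sub (integrable_const 1)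
      rw [integral_sub hL_int h13, integral_sub hρ_int (integrable_const 1), hρ_int1,
        integral_const, probReal_univ, one_smul]
      ring
    rw [hT_val]
    exact hle


open BoundedContinuousFunction in
lemma dv_singular {X : Type*} [MetricSpace X] [MeasurableSpace X] [BorelSpace X]
    (ν μ : Measure X) [IsProbabilityMeasure ν] [IsProbabilityMeasure μ] (hAC : ¬ ν ≪ μ) :
    relEntVar ν μ = ⊤ := by
  have hex : ¬ ∀ s : Set X, μ s = 0 → ν s = 0 := fun h =>
    hAC (Measure.AbsolutelyContinuous.mk fun s _ hs0 => h s hs0)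
  push_neg at hex
  obtain ⟨s, hμs, hνs⟩ := hex
  set A := toMeasurable μ s with hA
  have hA_meas : MeasurableSet A := measurableSet_toMeasurable μ s
  have hμA : μ A = 0 := by rw [hA, measure_toMeasurable]; exact hμs
  have hνA : ν A ≠ 0 := fun h => hνs (le_antisymm
    (h ▸ measure_mono (subset_toMeasurable μ s)) zero_le)
  set a : ℝ := (ν A).toReal with hadef
  have hνA_fin : ν A ≠ ⊤ := measure_ne_top ν A
  have ha : 0 < a := ENNReal.toReal_pos hνA hνA_fin
  -- key lower bound for each n
  have hkey : ∀ n : ℕ, ENNReal.ofReal ((n : ℝ) * (a / 2) - 1) ≤ relEntVar ν μ := by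
    intro n
    have hn0 : (0:ℝ) ≤ (n : ℝ) := Nat.cast_nonneg n
    -- inner closed set K
    obtain ⟨K, hKA, hK_closed, hKlt⟩ := hA_meas.exists_isClosed_lt_add (μ := ν) hνA_fin
      (ε := ν A / 2) (by simp [hνA])
    have hνK : ν A / 2 ≤ ν K := by
      by_contra hlt
      push_neg at hlt
      have hhalf_ne : ν A / 2 ≠ ⊤ := by
        simp [ENNReal.div_eq_top, hνA_fin]
      have h2 : ν K + ν A / 2 < ν A / 2 + ν A / 2 := by
        rw [ENNReal.add_lt_add_iff_right hhalf_ne]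
        exact hlt
      rw [ENNReal.add_halves] at h2
      exact absurd hKlt (not_lt.2 h2.le)
    have hμK : μ K = 0 := le_antisymm (hμA ▸ measure_mono hKA) zero_le
    -- outer open set U
    obtain ⟨U, hKU, hU_open, hμU⟩ := Set.exists_isOpen_lt_of_lt (μ := μ) K
      (ENNReal.ofReal (Real.exp (-(n:ℝ)))) (by
        rw [hμK]
        exact ENNReal.ofReal_pos.2 (Real.exp_pos _))
    -- Urysohn function
    obtain ⟨fc, hfc0, hfc1, hfc01⟩ := exists_continuous_zero_one_of_isClosed
      hU_open.isClosed_compl hK_closed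
      (Set.disjoint_left.2 fun x hxc hxK => hxc (hKU hxK))
    set φ : X →ᵇ ℝ := BoundedContinuousFunction.ofNormedAddCommGroup
      (fun x => (n : ℝ) * fc x) (continuous_const.mul fc.continuous) (n : ℝ)
      (fun x => by
        rw [Real.norm_eq_abs, abs_mul, abs_of_nonneg hn0, abs_of_nonneg (hfc01 x).1]
        calc (n:ℝ) * fc x ≤ (n:ℝ) * 1 := mul_le_mul_of_nonneg_left (hfc01 x).2 hn0
          _ = (n:ℝ) := mul_one _) with hφdef
    have hφval : ∀ x, φ x = (n : ℝ) * fc x := fun x => rfl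
    have hφ_nonneg : ∀ x, 0 ≤ φ x := fun x => by
      rw [hφval]; exact mul_nonneg hn0 (hfc01 x).1
    have hφ_le : ∀ x, φ x ≤ (n : ℝ) := fun x => by
      rw [hφval]
      calc (n:ℝ) * fc x ≤ (n:ℝ) * 1 := mul_le_mul_of_nonneg_left (hfc01 x).2 hn0
        _ = (n:ℝ) := mul_one _
    -- lower bound on ∫ φ dν
    have hK_meas : MeasurableSet K := hK_closed.measurableSet
    have hind_int : Integrable (K.indicator fun _ => (n : ℝ)) ν :=
      (integrable_const (n : ℝ)).indicator hK_meas
    have hint1 : (ν K).toReal * (n : ℝ) ≤ ∫ x, φ x ∂ν := by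
      have hmono := integral_mono hind_int (φ.integrable ν) (fun x => by
        by_cases hx : x ∈ K
        · rw [Set.indicator_of_mem hx, hφval, hfc1 hx]
          simp
        · rw [Set.indicator_of_notMem hx]
          exact hφ_nonneg x)
      rwa [integral_indicator_const _ hK_meas, smul_eq_mul] at hmono
    -- upper bound on ∫ exp φ dμ
    have hexpφ_int : Integrable (fun x => Real.exp (φ x)) μ :=
      ⟨(Real.continuous_exp.comp φ.continuous).measurable.aestronglyMeasurable,
        HasFiniteIntegral.of_bounded (C := Real.exp (n : ℝ))
          (Filter.Eventually.of_forall fun x => by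
            rw [Real.norm_eq_abs, abs_of_nonneg (Real.exp_nonneg _)]
            exact Real.exp_le_exp.2 (hφ_le x))⟩
    have hU_meas : MeasurableSet U := hU_open.measurableSet
    have hrhs_int : Integrable (fun x => 1 + Real.exp (n:ℝ) * U.indicator (fun _ => (1:ℝ)) x) μ :=
      (integrable_const 1).add (((integrable_const (1:ℝ)).indicator hU_meas).const_mul _)
    have hZ_le : ∫ x, Real.exp (φ x) ∂μ ≤ 2 := by
      have hmono := integral_mono hexpφ_int hrhs_int (fun x => by
        by_cases hx : x ∈ U
        · rw [Set.indicator_of_mem hx]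
          have : Real.exp (φ x) ≤ Real.exp (n:ℝ) := Real.exp_le_exp.2 (hφ_le x)
          have h2 : (0:ℝ) < Real.exp (n:ℝ) := Real.exp_pos _
          linarith [this]
        · have hφ0 : φ x = 0 := by
            rw [hφval, hfc0 hx]
            simp
          rw [Set.indicator_of_notMem hx, hφ0]
          simp)
      have hval : ∫ x, (1 + Real.exp (n:ℝ) * U.indicator (fun _ => (1:ℝ)) x) ∂μ
          = 1 + Real.exp (n:ℝ) * (μ U).toReal := by
        rw [integral_add (integrable_const 1) (((integrable_const (1:ℝ)).indicator hU_meas).const_mul _),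
          integral_const, probReal_univ, one_smul, integral_const_mul,
          integral_indicator_const _ hU_meas, smul_eq_mul, mul_one, measureReal_def]
      rw [hval] at hmono
      have hμU' : (μ U).toReal ≤ Real.exp (-(n:ℝ)) :=
        ENNReal.toReal_le_of_le_ofReal (Real.exp_nonneg _) hμU.le
      have h3 : Real.exp (n:ℝ) * (μ U).toReal ≤ Real.exp (n:ℝ) * Real.exp (-(n:ℝ)) :=
        mul_le_mul_of_nonneg_left hμU' (Real.exp_nonneg _)
      have h4 : Real.exp (n:ℝ) * Real.exp (-(n:ℝ)) = 1 := by
        rw [← Real.exp_add]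
        simp
      linarith
    have hZ_ge : (1:ℝ) ≤ ∫ x, Real.exp (φ x) ∂μ := by
      have hmono := integral_mono (integrable_const (1:ℝ)) hexpφ_int (fun x => by
        have := hφ_nonneg x
        calc (1:ℝ) = Real.exp 0 := Real.exp_zero.symm
          _ ≤ Real.exp (φ x) := Real.exp_le_exp.2 this)
      rwa [integral_const, probReal_univ, one_smul] at hmono
    have hlog : Real.log (∫ x, Real.exp (φ x) ∂μ) ≤ 1 := by
      have h1 : Real.log (∫ x, Real.exp (φ x) ∂μ) ≤ Real.log 2 :=
        Real.log_le_log (by linarith) hZ_le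
      have h2 : Real.log 2 ≤ 2 - 1 := Real.log_le_sub_one_of_pos (by norm_num)
      linarith
    -- (ν K).toReal ≥ a / 2
    have hKa : a / 2 ≤ (ν K).toReal := by
      have h1 : (ν A / 2).toReal ≤ (ν K).toReal :=
        ENNReal.toReal_mono (measure_ne_top ν K) hνK
      rwa [ENNReal.toReal_div, ENNReal.toReal_ofNat] at h1
    refine le_trans (ENNReal.ofReal_le_ofReal ?_) (le_iSup (fun ψ : X →ᵇ ℝ =>
      ENNReal.ofReal (∫ x, ψ x ∂ν - Real.log (∫ x, Real.exp (ψ x) ∂μ))) φ)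
    have h5 : (n:ℝ) * (a / 2) ≤ (ν K).toReal * (n:ℝ) := by
      rw [mul_comm]
      exact mul_le_mul_of_nonneg_right hKa hn0
    linarith [hint1, hlog]
  -- conclude
  by_contra hne
  have hfin : relEntVar ν μ ≠ ⊤ := hne
  set C : ℝ := (relEntVar ν μ).toReal with hC
  obtain ⟨n, hn⟩ := exists_nat_ge ((C + 2) * 2 / a)
  have h1 : C + 2 ≤ (n:ℝ) * (a / 2) := by
    rw [div_le_iff₀ (by positivity)] at hn
    nlinarith
  have hCge : (0:ℝ) ≤ C := ENNReal.toReal_nonneg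
  have h2 : relEntVar ν μ < ENNReal.ofReal ((n:ℝ) * (a / 2) - 1) := by
    conv_lhs => rw [← ENNReal.ofReal_toReal hfin]
    exact (ENNReal.ofReal_lt_ofReal_iff (by linarith)).2 (by linarith)
  exact absurd (hkey n) h2.not_ge


end DVhelpers

/-- the variational (Donsker–Varadhan) form of the relative entropy
equals `∫ h(dν/dμ) dμ` when `ν ≪ μ` (with `h(ρ) = ρ(log ρ − 1) + 1`) and `+∞` otherwise. -/
theorem stmt10 {X : Type*} [MetricSpace X] [PolishSpace X] [MeasurableSpace X] [BorelSpace X]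
    (ν μ : Measure X) [IsProbabilityMeasure ν] [IsProbabilityMeasure μ] :
    (ν ≪ μ → relEntVar ν μ = ∫⁻ x, hEnt (ν.rnDeriv μ x) ∂μ) ∧
      (¬ ν ≪ μ → relEntVar ν μ = ⊤) := by
  constructor
  · intro hAC
    exact le_antisymm (relEntVar_le_lintegral_hEnt ν μ hAC) (dv_lintegral_hEnt_le ν μ hAC)
  · intro hAC
    exact dv_singular ν μ hAC
end

section
/- (Exponential martingale / free energy bound.) Let f : X → [−∞,∞] be measurable with ∫ e^{τ f} dμ̄ ≤ 1. Then sup_{t ≥ 1} (1/t) E exp[t π_t(f)] < ∞, where π_t is the empirical measure of the renewal-reward process X_t built from i.i.d. samples (x_i) with law μ̄ and sojourn times τ(x_i). -/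
open MeasureTheory ENNReal Filter Set Topology
open scoped NNReal

/-- Arrival times `S_n = Σ_{i=1}^n τ(x_i)` of the renewal process. -/
noncomputable def arrS {X Ω : Type*} (τ : X → ℝ≥0∞) (xseq : ℕ → Ω → X) (n : ℕ) (ω : Ω) :
    ℝ≥0∞ :=
  ∑ i ∈ Finset.range n, τ (xseq i ω)

/-- `N_t = inf{n : S_{n+1} ≥ t}`. -/
noncomputable def arrN {X Ω : Type*} (τ : X → ℝ≥0∞) (xseq : ℕ → Ω → X) (t : ℝ) (ω : Ω) : ℕ :=
  sInf {n : ℕ | ENNReal.ofReal t ≤ arrS τ xseq (n + 1) ω}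

/-- `t·π_t(f) = Σ_{i=1}^{N_t} τ(x_i) f(x_i) + (t − S_{N_t}) f(x_{N_t+1})`, in `[−∞,∞]`. -/
noncomputable def tPi {X Ω : Type*} (τ : X → ℝ≥0∞) (xseq : ℕ → Ω → X) (f : X → EReal)
    (t : ℝ) (ω : Ω) : EReal :=
  (∑ i ∈ Finset.range (arrN τ xseq t ω), (τ (xseq i ω) : EReal) * f (xseq i ω)) +
    ((ENNReal.ofReal t - arrS τ xseq (arrN τ xseq t ω) ω : ℝ≥0∞) : EReal) *
      f (xseq (arrN τ xseq t ω) ω)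

/-- Multiplication of a nonnegative extended-real-valued measurable function with an
`EReal`-valued measurable function is measurable. -/
lemma measurable_coe_ennreal_mul_ereal {α : Type*} [MeasurableSpace α]
    {u : α → ℝ≥0∞} {v : α → EReal} (hu : Measurable u) (hv : Measurable v) :
    Measurable fun x => (u x : EReal) * v x := by
  classical
  have heq : (fun x => (u x : EReal) * v x) = fun x =>
      if u x = 0 then 0
      else if v x = ⊥ then ⊥
      else if v x = ⊤ then ⊤
      else if u x = ⊤ then (if v x < 0 then ⊥ else if v x = 0 then 0 else ⊤)
      else (((u x).toReal * (v x).toReal : ℝ) : EReal) := by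
    funext x
    by_cases h0 : u x = 0
    · simp [h0]
    have hupos : (0 : EReal) < (u x : EReal) := EReal.coe_ennreal_pos.2 (pos_iff_ne_zero.2 h0)
    rw [if_neg h0]
    by_cases hvb : v x = ⊥
    · rw [if_pos hvb, hvb]
      exact EReal.mul_bot_of_pos hupos
    rw [if_neg hvb]
    by_cases hvt : v x = ⊤
    · rw [if_pos hvt, hvt]
      exact EReal.mul_top_of_pos hupos
    rw [if_neg hvt]
    by_cases hut : u x = ⊤
    · rw [if_pos hut, hut, EReal.coe_ennreal_top]
      rcases lt_trichotomy (v x) 0 with hneg | hzero | hpos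
      · rw [if_pos hneg]
        exact EReal.top_mul_of_neg hneg
      · rw [if_neg (by simp [hzero] : ¬ v x < 0), if_pos hzero, hzero, mul_zero]
      · rw [if_neg hpos.not_gt, if_neg hpos.ne']
        exact EReal.top_mul_of_pos hpos
    · rw [if_neg hut]
      have h1 : ((u x : ℝ≥0∞) : EReal) = (((u x).toReal : ℝ) : EReal) := by
        lift (u x) to ℝ≥0 using hut with y hy
        simp [EReal.coe_nnreal_eq_coe_real]
      have h2 : ((v x).toReal : EReal) = v x := EReal.coe_toReal hvt hvb
      rw [EReal.coe_mul, h1, h2]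
  rw [heq]
  have m0 : MeasurableSet {x | u x = 0} := hu (measurableSet_singleton 0)
  have mt : MeasurableSet {x | u x = ⊤} := hu (measurableSet_singleton ⊤)
  have mvb : MeasurableSet {x | v x = ⊥} := hv (measurableSet_singleton ⊥)
  have mvt : MeasurableSet {x | v x = ⊤} := hv (measurableSet_singleton ⊤)
  have mvlt : MeasurableSet {x | v x < 0} := hv measurableSet_Iio
  have mv0 : MeasurableSet {x | v x = 0} := hv (measurableSet_singleton 0)
  refine Measurable.ite m0 measurable_const ?_
  refine Measurable.ite mvb measurable_const ?_
  refine Measurable.ite mvt measurable_const ?_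
  refine Measurable.ite mt ?_ ?_
  · exact Measurable.ite mvlt measurable_const (Measurable.ite mv0 measurable_const
      measurable_const)
  · exact (hu.ennreal_toReal.mul hv.ereal_toReal).coe_real_ereal

/-- `exp` of a finite sum is the product of the `exp`s. -/
lemma EReal.exp_sum {ι : Type*} (s : Finset ι) (a : ι → EReal) :
    EReal.exp (∑ i ∈ s, a i) = ∏ i ∈ s, EReal.exp (a i) := by
  classical
  induction s using Finset.induction_on with
  | empty => simp
  | insert _ _ hx ih =>
    rw [Finset.sum_insert hx, Finset.prod_insert hx, EReal.exp_add, ih]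

/-- If `τ > 0` a.e. and `∫ ψ ≤ 1`, then `∫ ψ e^{-τ} < 1`. -/
lemma lintegral_mul_exp_neg_lt_one {X : Type*} [MeasurableSpace X]
    (μ : Measure X) [IsProbabilityMeasure μ] (τ : X → ℝ≥0∞) (hτ : Measurable τ)
    (h0 : μ {x | τ x = 0} = 0) (ψ : X → ℝ≥0∞) (hψ : Measurable ψ)
    (hψ1 : ∫⁻ x, ψ x ∂μ ≤ 1) :
    ∫⁻ x, ψ x * EReal.exp (-(τ x : EReal)) ∂μ < 1 := by
  classical
  set φ : X → ℝ≥0∞ := fun x => EReal.exp (-(τ x : EReal)) with hφdef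
  have hφm : Measurable φ :=
    EReal.measurable_exp.comp (measurable_coe_ennreal_ereal.comp hτ).neg
  have hneg_nonpos : ∀ c : ℝ≥0∞, -(c : EReal) ≤ 0 := fun c => by
    have h := EReal.neg_le_neg_iff.2 (EReal.coe_ennreal_nonneg c)
    rwa [neg_zero] at h
  have hφ1 : ∀ x, φ x ≤ 1 := fun x => by
    rw [hφdef]
    simp only [EReal.exp_le_one_iff]
    exact hneg_nonpos _
  by_cases hb : ∃ n : ℕ, 0 < ∫⁻ x in {x | ((n : ℝ≥0∞))⁻¹ ≤ τ x}, ψ x ∂μ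
  · obtain ⟨n, hn⟩ := hb
    set εn : ℝ≥0∞ := ((n : ℝ≥0∞))⁻¹ with hεdef
    set A : Set X := {x | εn ≤ τ x} with hAdef
    have hA : MeasurableSet A := hτ measurableSet_Ici
    set q : ℝ≥0∞ := EReal.exp (-(εn : EReal)) with hqdef
    have hq1 : q < 1 := by
      rw [hqdef, ← EReal.exp_zero]
      apply EReal.exp_strictMono
      have hpos : (0 : EReal) < (εn : EReal) :=
        EReal.coe_ennreal_pos.2 (pos_iff_ne_zero.2 (ENNReal.inv_ne_zero.2
          (ENNReal.natCast_ne_top n)))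
      have := EReal.neg_lt_neg_iff.2 hpos
      rwa [neg_zero] at this
    have hint1 : ∫⁻ x in A, ψ x * φ x ∂μ ≤ (∫⁻ x in A, ψ x ∂μ) * q := by
      rw [← lintegral_mul_const q hψ]
      refine setLIntegral_mono (hψ.mul measurable_const) (fun x hx => ?_)
      refine mul_le_mul_right ?_ _
      rw [hφdef, hqdef]
      exact EReal.exp_monotone (EReal.neg_le_neg_iff.2 (EReal.coe_ennreal_le_coe_ennreal_iff.2 hx))
    have hint2 : ∫⁻ x in Aᶜ, ψ x * φ x ∂μ ≤ ∫⁻ x in Aᶜ, ψ x ∂μ := by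
      refine setLIntegral_mono hψ (fun x _ => ?_)
      calc ψ x * φ x ≤ ψ x * 1 := mul_le_mul_right (hφ1 x) _
      _ = ψ x := mul_one _
    have hAfin : ∫⁻ x in A, ψ x ∂μ ≤ 1 := le_trans (setLIntegral_le_lintegral _ _) hψ1
    have hAcfin : ∫⁻ x in Aᶜ, ψ x ∂μ ≤ 1 := le_trans (setLIntegral_le_lintegral _ _) hψ1
    calc ∫⁻ x, ψ x * φ x ∂μ
        = ∫⁻ x in A, ψ x * φ x ∂μ + ∫⁻ x in Aᶜ, ψ x * φ x ∂μ :=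
          (lintegral_add_compl _ hA).symm
      _ ≤ (∫⁻ x in A, ψ x ∂μ) * q + ∫⁻ x in Aᶜ, ψ x ∂μ := add_le_add hint1 hint2
      _ < (∫⁻ x in A, ψ x ∂μ) + ∫⁻ x in Aᶜ, ψ x ∂μ := by
          refine ENNReal.add_lt_add_right (ne_top_of_le_ne_top one_ne_top hAcfin) ?_
          calc (∫⁻ x in A, ψ x ∂μ) * q < (∫⁻ x in A, ψ x ∂μ) * 1 :=
                ENNReal.mul_lt_mul_right (ne_of_gt hn)
                  (ne_top_of_le_ne_top one_ne_top hAfin) hq1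
          _ = ∫⁻ x in A, ψ x ∂μ := mul_one _
      _ = ∫⁻ x, ψ x ∂μ := lintegral_add_compl _ hA
      _ ≤ 1 := hψ1
  · push_neg at hb
    have hball : ∀ n : ℕ, μ ({x | ((n : ℝ≥0∞))⁻¹ ≤ τ x} ∩ {x | ψ x ≠ 0}) = 0 := by
      intro n
      have hA : MeasurableSet {x | ((n : ℝ≥0∞))⁻¹ ≤ τ x} := hτ measurableSet_Ici
      have h : ∫⁻ x in {x | ((n : ℝ≥0∞))⁻¹ ≤ τ x}, ψ x ∂μ = 0 :=
        le_antisymm (hb n) (zero_le)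
      have hae : ψ =ᵐ[μ.restrict {x | ((n : ℝ≥0∞))⁻¹ ≤ τ x}] 0 :=
        (lintegral_eq_zero_iff hψ).mp h
      have h2 : μ.restrict {x | ((n : ℝ≥0∞))⁻¹ ≤ τ x} {x | ψ x ≠ 0} = 0 := by
        rw [Filter.EventuallyEq, ae_iff] at hae
        simpa using hae
      rwa [Measure.restrict_apply' hA, inter_comm] at h2
    have hsub : {x | ψ x * φ x ≠ 0} ⊆
        (⋃ n : ℕ, {x | ((n : ℝ≥0∞))⁻¹ ≤ τ x} ∩ {x | ψ x ≠ 0}) ∪ {x | τ x = 0} := by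
      intro x hx
      have hψx : ψ x ≠ 0 := by
        intro h
        apply hx
        rw [h, zero_mul]
      by_cases hτx : τ x = 0
      · exact Or.inr hτx
      · obtain ⟨n, hn⟩ := ENNReal.exists_inv_nat_lt hτx
        exact Or.inl (mem_iUnion.2 ⟨n, hn.le, hψx⟩)
    have hnull : μ {x | ψ x * φ x ≠ 0} = 0 := by
      refine measure_mono_null hsub ?_
      refine le_antisymm (le_trans (measure_union_le _ _) ?_) (zero_le)
      rw [measure_iUnion_null hball, h0, add_zero]
    have : ∫⁻ x, ψ x * φ x ∂μ = 0 := by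
      rw [lintegral_eq_zero_iff (f := fun x => ψ x * φ x) (hψ.mul hφm)]
      rw [Filter.EventuallyEq, ae_iff]
      simpa using hnull
    rw [this]
    exact zero_lt_one

/-- Products over independent coordinates integrate to products of integrals. -/
lemma lintegral_prod_comp_eq_prod {X Ω : Type*} [MeasurableSpace X] [MeasurableSpace Ω]
    (μbar : Measure X) (P : Measure Ω) [IsProbabilityMeasure P]
    (xseq : ℕ → Ω → X) (hxmeas : ∀ i, Measurable (xseq i))
    (hindep : ProbabilityTheory.iIndepFun xseq P)
    (hlaw : ∀ i, P.map (xseq i) = μbar)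
    (Φ : ℕ → X → ℝ≥0∞) (hΦ : ∀ i, Measurable (Φ i)) (n : ℕ) :
    ∫⁻ ω, ∏ i ∈ Finset.range n, Φ i (xseq i ω) ∂P
      = ∏ i ∈ Finset.range n, ∫⁻ x, Φ i x ∂μbar := by
  induction n with
  | zero => simp
  | succ n ih =>
    have hY : ∀ i, Measurable (fun ω => Φ i (xseq i ω)) := fun i => (hΦ i).comp (hxmeas i)
    have hind2 : ProbabilityTheory.IndepFun
        (fun ω => ∏ i ∈ Finset.range n, Φ i (xseq i ω)) (fun ω => Φ n (xseq n ω)) P := by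
      have h2 : ProbabilityTheory.iIndepFun
          (fun i ω => Φ i (xseq i ω)) P := hindep.comp (fun i => Φ i) (fun i => hΦ i)
      have h3 := h2.indepFun_prod_range_succ (fun i => hY i) n
      have : (∏ j ∈ Finset.range n, fun ω => Φ j (xseq j ω))
          = fun ω => ∏ i ∈ Finset.range n, Φ i (xseq i ω) := by
        funext ω
        simp [Finset.prod_apply]
      rwa [this] at h3
    have hmain := ProbabilityTheory.lintegral_mul_eq_lintegral_mul_lintegral_of_indepFun
      (μ := P) (Finset.measurable_prod _ (fun i _ => hY i)) (hY n) hind2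
    have hlast : ∫⁻ ω, Φ n (xseq n ω) ∂P = ∫⁻ x, Φ n x ∂μbar := by
      rw [← hlaw n, lintegral_map (hΦ n) (hxmeas n)]
    calc ∫⁻ ω, ∏ i ∈ Finset.range (n + 1), Φ i (xseq i ω) ∂P
        = ∫⁻ ω, (∏ i ∈ Finset.range n, Φ i (xseq i ω)) * Φ n (xseq n ω) ∂P := by
          simp_rw [Finset.prod_range_succ]
      _ = (∫⁻ ω, ∏ i ∈ Finset.range n, Φ i (xseq i ω) ∂P) * ∫⁻ ω, Φ n (xseq n ω) ∂P := hmain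
      _ = (∏ i ∈ Finset.range n, ∫⁻ x, Φ i x ∂μbar) * ∫⁻ x, Φ n x ∂μbar := by
          rw [ih, hlast]
      _ = ∏ i ∈ Finset.range (n + 1), ∫⁻ x, Φ i x ∂μbar := (Finset.prod_range_succ _ n).symm

/-- Lemma `l:freee`: if `∫ e^{τ f} dμ̄ ≤ 1` then
`sup_{t ≥ 1} (1/t) E exp[t π_t(f)] < ∞`, where `π_t` is the empirical measure of the
renewal process built from an i.i.d. sequence with law `μ̄` and sojourn times `τ`. -/
theorem stmt11 {X : Type*} [MetricSpace X] [PolishSpace X] [MeasurableSpace X] [BorelSpace X]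
    (μbar : Measure X) [IsProbabilityMeasure μbar] (τ : X → ℝ≥0∞) (hτ : Measurable τ)
    (h0 : μbar {x | τ x = 0} = 0) (hinf : μbar {x | τ x = ⊤} = 0)
    {Ω : Type*} [MeasurableSpace Ω] (P : Measure Ω) [IsProbabilityMeasure P]
    (xseq : ℕ → Ω → X) (hxmeas : ∀ i, Measurable (xseq i))
    (hindep : ProbabilityTheory.iIndepFun xseq P)
    (hlaw : ∀ i, P.map (xseq i) = μbar)
    (f : X → EReal) (hfm : Measurable f)
    (hint : ∫⁻ x, EReal.exp ((τ x : EReal) * f x) ∂μbar ≤ 1) :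
    (⨆ (t : ℝ) (_ : 1 ≤ t),
        ENNReal.ofReal (1 / t) * ∫⁻ ω, EReal.exp (tPi τ xseq f t ω) ∂P) < ⊤ := by
  classical
  set g : X → ℝ≥0∞ := fun x => EReal.exp ((τ x : EReal) * f x) with hgdef
  have hgm : Measurable g := EReal.measurable_exp.comp (measurable_coe_ennreal_mul_ereal hτ hfm)
  set φ : X → ℝ≥0∞ := fun x => EReal.exp (-(τ x : EReal)) with hφdef
  have hφm : Measurable φ :=
    EReal.measurable_exp.comp (measurable_coe_ennreal_ereal.comp hτ).neg
  have hc : ∫⁻ x, g x ∂μbar ≤ 1 := hint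
  set ρ : ℝ≥0∞ := ∫⁻ x, g x * φ x ∂μbar with hρdef
  have hρ1 : ρ < 1 := lintegral_mul_exp_neg_lt_one μbar τ hτ h0 g hgm hc
  set ρ₀ : ℝ≥0∞ := ∫⁻ x, φ x ∂μbar with hρ₀def
  have hρ₀1 : ρ₀ < 1 := by
    have := lintegral_mul_exp_neg_lt_one μbar τ hτ h0 (fun _ => 1) measurable_const
      (by simp)
    simpa using this
  -- choose K with ρ^K < e⁻¹
  set e1 : ℝ≥0∞ := ENNReal.ofReal (Real.exp 1) with he1def
  have he1pos : (0 : ℝ≥0∞) < e1 := ENNReal.ofReal_pos.2 (Real.exp_pos 1)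
  have he1top : e1 ≠ ⊤ := ENNReal.ofReal_ne_top
  have hKex : ∃ K : ℕ, ρ ^ K < e1⁻¹ := by
    have htend := ENNReal.tendsto_pow_atTop_nhds_zero_of_lt_one hρ1
    have hposinv : (0 : ℝ≥0∞) < e1⁻¹ := ENNReal.inv_pos.2 he1top
    exact (htend.eventually_lt_const hposinv).exists
  obtain ⟨K, hK⟩ := hKex
  -- the bad set where τ is 0 or ∞
  set Bad : Set X := {x | τ x = 0} ∪ {x | τ x = ⊤} with hBaddef
  have hBadm : MeasurableSet Bad :=
    (hτ (measurableSet_singleton 0)).union (hτ (measurableSet_singleton ⊤))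
  have hBadμ : μbar Bad = 0 := by
    refine le_antisymm (le_trans (measure_union_le _ _) ?_) (zero_le)
    rw [h0, hinf, add_zero]
  set Good : Set Ω := ⋂ i, xseq i ⁻¹' Badᶜ with hGooddef
  have hGoodm : MeasurableSet Good :=
    MeasurableSet.iInter fun i => (hxmeas i) hBadm.compl
  have hGoodc : P Goodᶜ = 0 := by
    rw [hGooddef, compl_iInter]
    refine measure_iUnion_null fun i => ?_
    have : xseq i ⁻¹' Badᶜᶜ = xseq i ⁻¹' Bad := by rw [compl_compl]
    rw [← preimage_compl, this, ← Measure.map_apply (hxmeas i) hBadm, hlaw i, hBadμ]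
  have hGoodτ : ∀ ω ∈ Good, ∀ i, τ (xseq i ω) ≠ 0 ∧ τ (xseq i ω) ≠ ⊤ := by
    intro ω hω i
    have := mem_iInter.1 hω i
    simp only [mem_preimage, mem_compl_iff, hBaddef, mem_union, mem_setOf_eq, not_or] at this
    exact this
  -- key algebraic identity on Good
  have hexp_inv : ∀ ω ∈ Good, ∀ n : ℕ,
      EReal.exp ((arrS τ xseq n ω : EReal)) * ∏ i ∈ Finset.range n, φ (xseq i ω) = 1 := by
    intro ω hω n
    induction n with
    | zero => simp [arrS]
    | succ n ih =>
      have hS : arrS τ xseq (n + 1) ω = arrS τ xseq n ω + τ (xseq n ω) :=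
        Finset.sum_range_succ _ n
      have hexpτ0 : EReal.exp ((τ (xseq n ω) : EReal)) ≠ 0 := by
        rw [Ne, EReal.exp_eq_zero_iff]
        exact EReal.coe_ennreal_ne_bot _
      have hexpτt : EReal.exp ((τ (xseq n ω) : EReal)) ≠ ⊤ := by
        rw [Ne, EReal.exp_eq_top_iff, EReal.coe_ennreal_eq_top_iff]
        exact (hGoodτ ω hω n).2
      rw [hS, EReal.coe_ennreal_add, EReal.exp_add, Finset.prod_range_succ]
      have hφn : φ (xseq n ω) = (EReal.exp ((τ (xseq n ω) : EReal)))⁻¹ := by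
        rw [hφdef]
        exact EReal.exp_neg _
      rw [hφn, mul_mul_mul_comm, ih, one_mul, ENNReal.mul_inv_cancel hexpτ0 hexpτt]
  -- final constant
  set B : ℝ≥0∞ := (1 - ρ)⁻¹ with hBdef
  have hBtop : B ≠ ⊤ := by
    rw [hBdef, Ne, ENNReal.inv_eq_top]
    exact (tsub_pos_of_lt hρ1).ne'
  have hCtop : (2 * K * 2 + 2 * B : ℝ≥0∞) < ⊤ := by
    refine ENNReal.add_lt_top.2 ⟨?_, ?_⟩
    · exact ENNReal.mul_lt_top (ENNReal.mul_lt_top (by simp) (by simp)) (by simp)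
    · exact ENNReal.mul_lt_top (by simp) hBtop.lt_top
  refine lt_of_le_of_lt ?_ hCtop
  refine iSup_le fun t => iSup_le fun ht => ?_
  -- now t is fixed, 1 ≤ t
  have ht0 : (0 : ℝ) < t := lt_of_lt_of_le one_pos ht
  set T : ℝ≥0∞ := ENNReal.ofReal t with hTdef
  have hTpos : 0 < T := ENNReal.ofReal_pos.2 ht0
  set Te : ℝ≥0∞ := ENNReal.ofReal (Real.exp t) with hTedef
  have hTetop : Te ≠ ⊤ := ENNReal.ofReal_ne_top
  have hTe_exp : EReal.exp ((T : EReal)) = Te := by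
    rw [hTdef, EReal.coe_ennreal_ofReal, max_eq_left ht0.le, EReal.exp_coe]
  set m : ℕ := K * ⌈t⌉₊ with hmdef
  -- Te * ρ ^ m ≤ 1
  have hTeρ : Te * ρ ^ m ≤ 1 := by
    have h1 : Te ≤ e1 ^ ⌈t⌉₊ := by
      rw [he1def, ← ENNReal.ofReal_pow (Real.exp_nonneg 1)]
      refine ENNReal.ofReal_le_ofReal ?_
      rw [← Real.exp_nat_mul]
      exact Real.exp_le_exp.2 (by simpa using Nat.le_ceil t)
    have h2 : ρ ^ m ≤ (e1 ^ ⌈t⌉₊)⁻¹ := by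
      rw [hmdef, pow_mul, ENNReal.inv_pow]
      exact pow_le_pow_left₀ (zero_le) hK.le _
    calc Te * ρ ^ m ≤ e1 ^ ⌈t⌉₊ * (e1 ^ ⌈t⌉₊)⁻¹ := mul_le_mul' h1 h2
    _ = 1 := ENNReal.mul_inv_cancel (pow_ne_zero _ he1pos.ne') (ENNReal.pow_ne_top he1top)
  -- events
  set G : Set Ω := ⋃ n : ℕ, {ω | T ≤ arrS τ xseq (n + 1) ω} with hGdef
  have harrSm : ∀ n, Measurable fun ω => arrS τ xseq n ω := by
    intro n
    unfold arrS
    exact Finset.measurable_sum _ fun i _ => hτ.comp (hxmeas i)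
  have hGm : MeasurableSet G := by
    refine MeasurableSet.iUnion fun n => ?_
    exact measurableSet_le measurable_const (harrSm (n + 1))
  set S : Set Ω := Good ∩ G with hSdef
  have hSm : MeasurableSet S := hGoodm.inter hGm
  -- P Sᶜ = 0
  have hGcGood : P (Gᶜ ∩ Good) = 0 := by
    have key : ∀ n : ℕ, P (Gᶜ ∩ Good) ≤ Te * ρ₀ ^ n := by
      intro n
      have hsub : Gᶜ ∩ Good ⊆ {ω | arrS τ xseq n ω < T} ∩ Good := by
        intro ω hω
        refine ⟨?_, hω.2⟩
        have h1 : ω ∈ Gᶜ := hω.1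
        rw [hGdef, compl_iUnion] at h1
        cases n with
        | zero =>
          simp only [mem_setOf_eq, arrS, Finset.range_zero, Finset.sum_empty]
          exact hTpos
        | succ k =>
          have := mem_iInter.1 h1 k
          simpa [not_le] using this
      have hpt : ∀ ω, ({ω | arrS τ xseq n ω < T} ∩ Good).indicator (fun _ => (1 : ℝ≥0∞)) ω
          ≤ Te * ∏ i ∈ Finset.range n, φ (xseq i ω) := by
        intro ω
        by_cases hω : ω ∈ {ω | arrS τ xseq n ω < T} ∩ Good
        · rw [indicator_of_mem hω]
          have h1 : EReal.exp ((arrS τ xseq n ω : EReal))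
              * ∏ i ∈ Finset.range n, φ (xseq i ω) = 1 := hexp_inv ω hω.2 n
          rw [← h1]
          refine mul_le_mul_left ?_ _
          rw [← hTe_exp]
          exact EReal.exp_monotone (EReal.coe_ennreal_le_coe_ennreal_iff.2 hω.1.le)
        · rw [indicator_of_notMem hω]
          exact zero_le
      have hmeas : MeasurableSet ({ω | arrS τ xseq n ω < T} ∩ Good) :=
        (measurableSet_lt (harrSm n) measurable_const).inter hGoodm
      calc P (Gᶜ ∩ Good) ≤ P ({ω | arrS τ xseq n ω < T} ∩ Good) := measure_mono hsub
      _ = ∫⁻ ω, ({ω | arrS τ xseq n ω < T} ∩ Good).indicator (fun _ => (1 : ℝ≥0∞)) ω ∂P := by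
          rw [lintegral_indicator_const hmeas, one_mul]
      _ ≤ ∫⁻ ω, Te * ∏ i ∈ Finset.range n, φ (xseq i ω) ∂P := lintegral_mono hpt
      _ = Te * ∫⁻ ω, ∏ i ∈ Finset.range n, φ (xseq i ω) ∂P :=
          lintegral_const_mul Te (Finset.measurable_prod _ fun i _ => hφm.comp (hxmeas i))
      _ = Te * ρ₀ ^ n := by
          rw [lintegral_prod_comp_eq_prod μbar P xseq hxmeas hindep hlaw
            (fun _ => φ) (fun _ => hφm) n]
          rw [Finset.prod_const, Finset.card_range]
    have htend : Tendsto (fun n : ℕ => Te * ρ₀ ^ n) atTop (𝓝 0) := by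
      have := ENNReal.Tendsto.const_mul (ENNReal.tendsto_pow_atTop_nhds_zero_of_lt_one hρ₀1)
        (Or.inr hTetop)
      simpa using this
    have : P (Gᶜ ∩ Good) ≤ 0 := ge_of_tendsto' htend key
    exact le_antisymm this (zero_le)
  have hSc : P Sᶜ = 0 := by
    rw [hSdef, compl_inter]
    refine le_antisymm (le_trans (measure_union_le _ _) ?_) (zero_le)
    have h2 : P Gᶜ = 0 := by
      have : Gᶜ ⊆ (Gᶜ ∩ Good) ∪ Goodᶜ := by
        intro ω hω
        by_cases h : ω ∈ Good
        · exact Or.inl ⟨hω, h⟩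
        · exact Or.inr h
      refine le_antisymm (le_trans (measure_mono this) ?_) (zero_le)
      refine le_trans (measure_union_le _ _) ?_
      rw [hGcGood, hGoodc, add_zero]
    rw [hGoodc, h2, add_zero]
  -- the dominating functions
  set w : ℕ → Ω → ℝ≥0∞ := fun n ω =>
    if n < m then (∏ i ∈ Finset.range n, g (xseq i ω)) * (1 + g (xseq n ω))
    else Te * ((∏ i ∈ Finset.range n, (g (xseq i ω) * φ (xseq i ω))) * (1 + g (xseq n ω)))
    with hwdef
  have hwm : ∀ n, Measurable (w n) := by
    intro n
    by_cases h : n < m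
    · simp only [hwdef, h, if_true]
      exact (Finset.measurable_prod _ fun i _ => hgm.comp (hxmeas i)).mul
        (measurable_const.add (hgm.comp (hxmeas n)))
    · simp only [hwdef, h, if_false]
      exact measurable_const.mul
        ((Finset.measurable_prod _ fun i _ => (hgm.comp (hxmeas i)).mul
          (hφm.comp (hxmeas i))).mul (measurable_const.add (hgm.comp (hxmeas n))))
  -- pointwise domination
  have hdom : ∀ ω, EReal.exp (tPi τ xseq f t ω)
      ≤ Sᶜ.indicator (fun _ => (⊤ : ℝ≥0∞)) ω + ∑' n, w n ω := by
    intro ω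
    by_cases hω : ω ∈ S
    · have hω' : ω ∉ Sᶜ := fun h => h hω
      rw [indicator_of_notMem hω', zero_add]
      obtain ⟨hGood, hG⟩ := hω
      set n : ℕ := arrN τ xseq t ω with hndef
      have hne : {k : ℕ | ENNReal.ofReal t ≤ arrS τ xseq (k + 1) ω}.Nonempty := by
        obtain ⟨_, ⟨k, rfl⟩, hk⟩ := hG
        exact ⟨k, hk⟩
      have hup : T ≤ arrS τ xseq (n + 1) ω := Nat.sInf_mem hne
      have hlow : arrS τ xseq n ω < T := by
        rcases Nat.eq_zero_or_eq_succ_pred n with h | h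
        · rw [h]
          simp only [arrS, Finset.range_zero, Finset.sum_empty]
          exact hTpos
        · have hnS : n = sInf {k : ℕ | ENNReal.ofReal t ≤ arrS τ xseq (k + 1) ω} := hndef
          have hk : n - 1 < sInf {k : ℕ | ENNReal.ofReal t ≤ arrS τ xseq (k + 1) ω} := by
            rw [← hnS]
            omega
          have := Nat.notMem_of_lt_sInf hk
          simp only [mem_setOf_eq, not_le] at this
          have hn1 : n - 1 + 1 = n := by omega
          rwa [hn1] at this
      -- exp(tPi) ≤ M_n * (1 + g x_n)
      have hexp : EReal.exp (tPi τ xseq f t ω)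
          ≤ (∏ i ∈ Finset.range n, g (xseq i ω)) * (1 + g (xseq n ω)) := by
        rw [tPi, EReal.exp_add, EReal.exp_sum]
        refine mul_le_mul' (le_of_eq (Finset.prod_congr rfl fun i _ => rfl)) ?_
        rcases le_total (f (xseq n ω)) 0 with hf0 | hf0
        · have hnp : ((T - arrS τ xseq n ω : ℝ≥0∞) : EReal) * f (xseq n ω) ≤ 0 :=
            mul_nonpos_of_nonneg_of_nonpos (EReal.coe_ennreal_nonneg _) hf0
          calc EReal.exp (((T - arrS τ xseq n ω : ℝ≥0∞) : EReal) * f (xseq n ω))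
              ≤ EReal.exp 0 := EReal.exp_monotone hnp
          _ = 1 := EReal.exp_zero
          _ ≤ 1 + g (xseq n ω) := le_self_add
        · have haτ : (T - arrS τ xseq n ω : ℝ≥0∞) ≤ τ (xseq n ω) := by
            rw [tsub_le_iff_left]
            have hS : arrS τ xseq (n + 1) ω = arrS τ xseq n ω + τ (xseq n ω) :=
              Finset.sum_range_succ _ n
            rw [← hS]
            exact hup
          have hmul : ((T - arrS τ xseq n ω : ℝ≥0∞) : EReal) * f (xseq n ω)
              ≤ (τ (xseq n ω) : EReal) * f (xseq n ω) :=
            mul_le_mul_of_nonneg_right (EReal.coe_ennreal_le_coe_ennreal_iff.2 haτ) hf0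
          calc EReal.exp (((T - arrS τ xseq n ω : ℝ≥0∞) : EReal) * f (xseq n ω))
              ≤ EReal.exp ((τ (xseq n ω) : EReal) * f (xseq n ω)) := EReal.exp_monotone hmul
          _ = g (xseq n ω) := rfl
          _ ≤ 1 + g (xseq n ω) := le_add_self
      refine le_trans ?_ (ENNReal.le_tsum n)
      by_cases hnm : n < m
      · rw [hwdef]
        simp only [hnm, if_true]
        exact hexp
      · rw [hwdef]
        simp only [hnm, if_false]
        refine hexp.trans ?_
        have hkey : (∏ i ∈ Finset.range n, g (xseq i ω))
            ≤ Te * ∏ i ∈ Finset.range n, (g (xseq i ω) * φ (xseq i ω)) := by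
          have h1 : EReal.exp ((arrS τ xseq n ω : EReal))
              * ∏ i ∈ Finset.range n, φ (xseq i ω) = 1 := hexp_inv ω hGood n
          have h2 : EReal.exp ((arrS τ xseq n ω : EReal)) ≤ Te := by
            rw [← hTe_exp]
            exact EReal.exp_monotone (EReal.coe_ennreal_le_coe_ennreal_iff.2 hlow.le)
          calc ∏ i ∈ Finset.range n, g (xseq i ω)
              = (∏ i ∈ Finset.range n, g (xseq i ω)) * 1 := (mul_one _).symm
          _ = (∏ i ∈ Finset.range n, g (xseq i ω)) *
              (EReal.exp ((arrS τ xseq n ω : EReal)) * ∏ i ∈ Finset.range n, φ (xseq i ω)) := by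
              rw [h1]
          _ = EReal.exp ((arrS τ xseq n ω : EReal)) *
              ((∏ i ∈ Finset.range n, g (xseq i ω)) * ∏ i ∈ Finset.range n, φ (xseq i ω)) := by
              ring
          _ = EReal.exp ((arrS τ xseq n ω : EReal)) *
              ∏ i ∈ Finset.range n, (g (xseq i ω) * φ (xseq i ω)) := by
              rw [Finset.prod_mul_distrib]
          _ ≤ Te * ∏ i ∈ Finset.range n, (g (xseq i ω) * φ (xseq i ω)) :=
              mul_le_mul_left h2 _
        calc (∏ i ∈ Finset.range n, g (xseq i ω)) * (1 + g (xseq n ω))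
            ≤ (Te * ∏ i ∈ Finset.range n, (g (xseq i ω) * φ (xseq i ω))) * (1 + g (xseq n ω)) :=
              mul_le_mul_left hkey _
        _ = Te * ((∏ i ∈ Finset.range n, (g (xseq i ω) * φ (xseq i ω))) * (1 + g (xseq n ω))) :=
              mul_assoc _ _ _
    · rw [Set.indicator_of_mem (show ω ∈ Sᶜ from hω), top_add]
      exact le_top
  -- integral bounds for w
  have hwint : ∀ n, ∫⁻ ω, w n ω ∂P ≤ if n < m then 2 else 2 * (Te * ρ ^ n) := by
    intro n
    have hint1g : ∫⁻ x, (1 + g x) ∂μbar = 1 + ∫⁻ x, g x ∂μbar := by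
      rw [lintegral_add_left measurable_const, lintegral_one, measure_univ]
    have h1g2 : ∫⁻ x, (1 + g x) ∂μbar ≤ 2 := by
      rw [hint1g]
      calc (1 : ℝ≥0∞) + ∫⁻ x, g x ∂μbar ≤ 1 + 1 := add_le_add le_rfl hc
      _ = 2 := one_add_one_eq_two
    by_cases h : n < m
    · simp only [h, if_true]
      set Φ : ℕ → X → ℝ≥0∞ := fun i => if i = n then (fun x => 1 + g x) else g with hΦdef
      have hΦm : ∀ i, Measurable (Φ i) := by
        intro i
        by_cases hi : i = n
        · simp only [hΦdef, hi, if_true]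
          exact measurable_const.add hgm
        · simp only [hΦdef, hi, if_false]
          exact hgm
      have heq : ∀ ω, w n ω = ∏ i ∈ Finset.range (n + 1), Φ i (xseq i ω) := by
        intro ω
        rw [hwdef]
        simp only [h, if_true]
        rw [Finset.prod_range_succ]
        congr 1
        · refine Finset.prod_congr rfl fun i hi => ?_
          have : i ≠ n := Nat.ne_of_lt (Finset.mem_range.1 hi)
          simp [hΦdef, this]
        · simp [hΦdef]
      calc ∫⁻ ω, w n ω ∂P = ∫⁻ ω, ∏ i ∈ Finset.range (n + 1), Φ i (xseq i ω) ∂P := by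
            refine lintegral_congr fun ω => heq ω
      _ = ∏ i ∈ Finset.range (n + 1), ∫⁻ x, Φ i x ∂μbar :=
            lintegral_prod_comp_eq_prod μbar P xseq hxmeas hindep hlaw Φ hΦm (n + 1)
      _ = (∏ i ∈ Finset.range n, ∫⁻ x, Φ i x ∂μbar) * ∫⁻ x, Φ n x ∂μbar :=
            Finset.prod_range_succ _ n
      _ ≤ 1 * 2 := by
            refine mul_le_mul' ?_ ?_
            · refine Finset.prod_le_one (fun i _ => zero_le) (fun i hi => ?_)
              have hi' : i ≠ n := Nat.ne_of_lt (Finset.mem_range.1 hi)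
              simp only [hΦdef, hi', if_false]
              exact hc
            · simp only [hΦdef, if_true]
              exact h1g2
      _ = 2 := one_mul 2
    · simp only [h, if_false]
      set Φ : ℕ → X → ℝ≥0∞ := fun i => if i = n then (fun x => 1 + g x)
        else (fun x => g x * φ x) with hΦdef
      have hΦm : ∀ i, Measurable (Φ i) := by
        intro i
        by_cases hi : i = n
        · simp only [hΦdef, hi, if_true]
          exact measurable_const.add hgm
        · simp only [hΦdef, hi, if_false]
          exact hgm.mul hφm
      have heq : ∀ ω, w n ω = Te * ∏ i ∈ Finset.range (n + 1), Φ i (xseq i ω) := by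
        intro ω
        rw [hwdef]
        simp only [h, if_false]
        congr 1
        rw [Finset.prod_range_succ]
        congr 1
        · refine Finset.prod_congr rfl fun i hi => ?_
          have : i ≠ n := Nat.ne_of_lt (Finset.mem_range.1 hi)
          simp [hΦdef, this]
        · simp [hΦdef]
      have hmeasprod : Measurable fun ω => ∏ i ∈ Finset.range (n + 1), Φ i (xseq i ω) :=
        Finset.measurable_prod _ fun i _ => (hΦm i).comp (hxmeas i)
      calc ∫⁻ ω, w n ω ∂P
          = ∫⁻ ω, Te * ∏ i ∈ Finset.range (n + 1), Φ i (xseq i ω) ∂P :=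
            lintegral_congr fun ω => heq ω
      _ = Te * ∫⁻ ω, ∏ i ∈ Finset.range (n + 1), Φ i (xseq i ω) ∂P :=
            lintegral_const_mul Te hmeasprod
      _ = Te * ∏ i ∈ Finset.range (n + 1), ∫⁻ x, Φ i x ∂μbar := by
            rw [lintegral_prod_comp_eq_prod μbar P xseq hxmeas hindep hlaw Φ hΦm (n + 1)]
      _ = Te * ((∏ i ∈ Finset.range n, ∫⁻ x, Φ i x ∂μbar) * ∫⁻ x, Φ n x ∂μbar) := by
            rw [Finset.prod_range_succ]
      _ ≤ Te * (ρ ^ n * 2) := by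
            refine mul_le_mul_right (mul_le_mul' ?_ ?_) Te
            · refine le_of_eq ?_
              have : ∀ i ∈ Finset.range n, ∫⁻ x, Φ i x ∂μbar = ρ := by
                intro i hi
                have hi' : i ≠ n := Nat.ne_of_lt (Finset.mem_range.1 hi)
                simp only [hΦdef, hi', if_false]
                rfl
              rw [Finset.prod_congr rfl this, Finset.prod_const, Finset.card_range]
            · simp only [hΦdef, if_true]
              exact h1g2
      _ = 2 * (Te * ρ ^ n) := by ring
  -- sum the bounds
  have hsum : ∑' n, ∫⁻ ω, w n ω ∂P ≤ 2 * m + 2 * B := by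
    set F : ℕ → ℝ≥0∞ := fun n => if n < m then 2 else 0 with hFdef
    set H : ℕ → ℝ≥0∞ := fun n => if m ≤ n then 2 * ρ ^ (n - m) else 0 with hHdef
    have hFH : ∀ n, (if n < m then (2:ℝ≥0∞) else 2 * (Te * ρ ^ n)) ≤ F n + H n := by
      intro n
      by_cases h : n < m
      · simp only [h, if_true, hFdef]
        exact le_self_add
      · push_neg at h
        simp only [h.not_gt, if_false, hFdef, hHdef, h, if_true]
        have : Te * ρ ^ n ≤ ρ ^ (n - m) := by
          have hp : ρ ^ n = ρ ^ m * ρ ^ (n - m) := by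
            rw [← pow_add]
            congr 1
            omega
          calc Te * ρ ^ n = Te * (ρ ^ m * ρ ^ (n - m)) := by rw [hp]
          _ = (Te * ρ ^ m) * ρ ^ (n - m) := by ring
          _ ≤ 1 * ρ ^ (n - m) := mul_le_mul_left hTeρ _
          _ = ρ ^ (n - m) := one_mul _
        calc 2 * (Te * ρ ^ n) ≤ 2 * ρ ^ (n - m) := mul_le_mul_right this 2
        _ ≤ 0 + 2 * ρ ^ (n - m) := by rw [zero_add]
    have hFsum : ∑' n, F n = 2 * m := by
      rw [tsum_eq_sum (s := Finset.range m) (fun b hb => by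
        simp only [hFdef]
        rw [if_neg (by simpa using hb)])]
      have : ∀ b ∈ Finset.range m, F b = 2 := by
        intro b hb
        simp only [hFdef]
        rw [if_pos (Finset.mem_range.1 hb)]
      rw [Finset.sum_congr rfl this, Finset.sum_const, Finset.card_range, nsmul_eq_mul,
        mul_comm]
    have hHsum : ∑' n, H n = 2 * B := by
      have hinj : Function.Injective (fun k : ℕ => k + m) := add_left_injective m
      have hsupp : Function.support H ⊆ Set.range (fun k : ℕ => k + m) := by
        intro x hx
        by_contra hxr
        apply hx
        have hxm : ¬ m ≤ x := by
          intro hle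
          exact hxr ⟨x - m, Nat.sub_add_cancel hle⟩
        simp only [hHdef]
        rw [if_neg hxm]
      have := Function.Injective.tsum_eq hinj (f := H) hsupp
      rw [← this]
      have : ∀ k : ℕ, H (k + m) = 2 * ρ ^ k := by
        intro k
        simp only [hHdef]
        rw [if_pos (Nat.le_add_left m k), Nat.add_sub_cancel]
      rw [tsum_congr this, ENNReal.tsum_mul_left, ENNReal.tsum_geometric, hBdef]
    calc ∑' n, ∫⁻ ω, w n ω ∂P ≤ ∑' n, (F n + H n) :=
          ENNReal.tsum_le_tsum fun n => le_trans (hwint n) (hFH n)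
    _ = ∑' n, F n + ∑' n, H n := ENNReal.tsum_add
    _ = 2 * m + 2 * B := by rw [hFsum, hHsum]
  -- total integral bound
  have htotal : ∫⁻ ω, EReal.exp (tPi τ xseq f t ω) ∂P ≤ 2 * m + 2 * B := by
    calc ∫⁻ ω, EReal.exp (tPi τ xseq f t ω) ∂P
        ≤ ∫⁻ ω, (Sᶜ.indicator (fun _ => (⊤ : ℝ≥0∞)) ω + ∑' n, w n ω) ∂P :=
          lintegral_mono hdom
    _ = ∫⁻ ω, Sᶜ.indicator (fun _ => (⊤ : ℝ≥0∞)) ω ∂P + ∫⁻ ω, ∑' n, w n ω ∂P :=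
          lintegral_add_left (measurable_const.indicator hSm.compl) _
    _ = ⊤ * P Sᶜ + ∫⁻ ω, ∑' n, w n ω ∂P := by
          rw [lintegral_indicator_const hSm.compl]
    _ = ∫⁻ ω, ∑' n, w n ω ∂P := by rw [hSc, mul_zero, zero_add]
    _ = ∑' n, ∫⁻ ω, w n ω ∂P := lintegral_tsum fun n => (hwm n).aemeasurable
    _ ≤ 2 * m + 2 * B := hsum
  -- final bound
  have hoft : ENNReal.ofReal (1 / t) ≤ 1 := by
    rw [ENNReal.ofReal_le_one]
    rw [div_le_one ht0]
    exact ht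
  have hceil : ENNReal.ofReal (1 / t) * (m : ℝ≥0∞) ≤ K * 2 := by
    have h1 : (m : ℝ≥0∞) = (K : ℝ≥0∞) * (⌈t⌉₊ : ℝ≥0∞) := by
      rw [hmdef]
      push_cast
      ring
    have h2 : ENNReal.ofReal (1 / t) * (⌈t⌉₊ : ℝ≥0∞) ≤ 2 := by
      rw [← ENNReal.ofReal_natCast ⌈t⌉₊, ← ENNReal.ofReal_mul (by positivity)]
      calc ENNReal.ofReal (1 / t * ⌈t⌉₊) ≤ ENNReal.ofReal 2 := by
            refine ENNReal.ofReal_le_ofReal ?_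
            have hle : (⌈t⌉₊ : ℝ) ≤ 2 * t := by
              have := Nat.ceil_lt_add_one (R := ℝ) ht0.le
              linarith
            rw [div_mul_eq_mul_div, one_mul, div_le_iff₀ ht0]
            linarith
      _ = 2 := by norm_num
    calc ENNReal.ofReal (1 / t) * (m : ℝ≥0∞)
        = (K : ℝ≥0∞) * (ENNReal.ofReal (1 / t) * (⌈t⌉₊ : ℝ≥0∞)) := by rw [h1]; ring
    _ ≤ (K : ℝ≥0∞) * 2 := mul_le_mul_right h2 _
  calc ENNReal.ofReal (1 / t) * ∫⁻ ω, EReal.exp (tPi τ xseq f t ω) ∂P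
      ≤ ENNReal.ofReal (1 / t) * (2 * m + 2 * B) := mul_le_mul_right htotal _
  _ = 2 * (ENNReal.ofReal (1 / t) * (m : ℝ≥0∞)) + ENNReal.ofReal (1 / t) * (2 * B) := by
      ring
  _ ≤ 2 * ((K : ℝ≥0∞) * 2) + 1 * (2 * B) :=
      add_le_add (mul_le_mul_right hceil 2) (mul_le_mul_left hoft _)
  _ = 2 * K * 2 + 2 * B := by ring
end

section
/- (Lower-bound criterion for large deviations from entropy estimates.) Let (P_t)_{t>0} be Borel probability measures on a Polish space Z and J : Z → [0,∞]. Suppose that for each z ∈ Z there exists a family (Q_t) of Borel probability measures on Z with Q_t → δ_z narrowly and limsup_t (1/t) H(Q_t | P_t) ≤ J(z). Then for every open O ⊆ Z, liminf_t (1/t) log P_t(O) ≥ −inf_{z ∈ O} Ĵ(z), where Ĵ is the lower semicontinuous envelope of J. -/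
open MeasureTheory ENNReal Filter Set Topology BoundedContinuousFunction
open scoped NNReal

/-- The lower semicontinuous envelope `Ĵ(z) = sup_{U ∈ 𝓝 z} inf_U J`. -/
noncomputable def lscEnv {Z : Type*} [TopologicalSpace Z] (J : Z → ℝ≥0∞) (z : Z) : ℝ≥0∞ :=
  ⨆ U ∈ 𝓝 z, ⨅ y ∈ U, J y

-- Young-type inequality
lemma young (c : ℝ) (ρ : ℝ≥0∞) :
    ENNReal.ofReal c * ρ ≤ hEnt ρ + ENNReal.ofReal (Real.exp c - 1) := by
  rcases eq_or_ne ρ ⊤ with h | h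
  · simp [hEnt, h]
  rcases le_or_gt c 0 with hc | hc
  · simp [ENNReal.ofReal_eq_zero.2 hc]
  · set r := ρ.toReal with hr
    have hr0 : 0 ≤ r := ENNReal.toReal_nonneg
    have hρ : ρ = ENNReal.ofReal r := (ENNReal.ofReal_toReal h).symm
    have hEntρ : hEnt ρ = ENNReal.ofReal (r * (Real.log r - 1) + 1) := by
      simp [hEnt, h, hr]
    have hreal : c * r ≤ (r * (Real.log r - 1) + 1) + (Real.exp c - 1) := by
      rcases eq_or_lt_of_le hr0 with h0 | h0
      · rw [← h0]
        have := Real.exp_pos c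
        nlinarith
      · have h1 : (c - Real.log r) + 1 ≤ Real.exp (c - Real.log r) :=
          Real.add_one_le_exp _
        have h2 : r * ((c - Real.log r) + 1) ≤ r * Real.exp (c - Real.log r) :=
          mul_le_mul_of_nonneg_left h1 hr0
        have h3 : r * Real.exp (c - Real.log r) = Real.exp c := by
          rw [Real.exp_sub, Real.exp_log h0]
          field_simp
        nlinarith
    calc ENNReal.ofReal c * ρ = ENNReal.ofReal (c * r) := by
          rw [hρ, ← ENNReal.ofReal_mul hc.le]
      _ ≤ ENNReal.ofReal ((r * (Real.log r - 1) + 1) + (Real.exp c - 1)) :=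
          ENNReal.ofReal_le_ofReal hreal
      _ ≤ ENNReal.ofReal (r * (Real.log r - 1) + 1) + ENNReal.ofReal (Real.exp c - 1) :=
          ENNReal.ofReal_add_le
      _ = hEnt ρ + ENNReal.ofReal (Real.exp c - 1) := by rw [hEntρ]

-- Key entropy inequality
lemma keyIneq {α : Type*} [MeasurableSpace α] (ν μ : Measure α)
    [IsProbabilityMeasure μ] [IsProbabilityMeasure ν] (hac : ν ≪ μ) (A : Set α) :
    ENNReal.ofReal (-Real.log (μ A).toReal) * ν A ≤ relEnt ν μ + 1 := by
  set c := -Real.log (μ A).toReal with hcdef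
  have hμA1 : (μ A).toReal ≤ 1 := by
    have := prob_le_one (μ := μ) (s := A)
    simpa using ENNReal.toReal_mono one_ne_top this
  have hc : 0 ≤ c := neg_nonneg.2 (Real.log_nonpos ENNReal.toReal_nonneg hμA1)
  have htail : ENNReal.ofReal (Real.exp c - 1) * μ A ≤ 1 := by
    rcases eq_or_ne (μ A) 0 with h0 | h0
    · simp [h0]
    · set p := (μ A).toReal with hpdef
      have hp : 0 < p := ENNReal.toReal_pos h0 (measure_ne_top μ A)
      have hexp : Real.exp c = p⁻¹ := by
        rw [hcdef, Real.exp_neg, Real.exp_log hp]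
      have hμA : μ A = ENNReal.ofReal p :=
        (ENNReal.ofReal_toReal (measure_ne_top μ A)).symm
      have hinv : (1:ℝ) ≤ p⁻¹ := by
        rw [le_inv_comm₀ one_pos hp]; simpa using hμA1
      calc ENNReal.ofReal (Real.exp c - 1) * μ A
          = ENNReal.ofReal ((p⁻¹ - 1) * p) := by
            rw [hexp]
            conv_lhs => rw [hμA]
            rw [← ENNReal.ofReal_mul (by linarith)]
        _ = ENNReal.ofReal (1 - p) := by
            congr 1; field_simp
        _ ≤ ENNReal.ofReal 1 := ENNReal.ofReal_le_ofReal (by linarith [hp])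
        _ = 1 := ENNReal.ofReal_one
  calc ENNReal.ofReal c * ν A
      = ∫⁻ x in A, ENNReal.ofReal c * ν.rnDeriv μ x ∂μ := by
        rw [lintegral_const_mul _ (Measure.measurable_rnDeriv ν μ),
          Measure.setLIntegral_rnDeriv hac]
    _ ≤ ∫⁻ x in A, (hEnt (ν.rnDeriv μ x) + ENNReal.ofReal (Real.exp c - 1)) ∂μ :=
        lintegral_mono fun x => young c _
    _ = (∫⁻ x in A, hEnt (ν.rnDeriv μ x) ∂μ) + ENNReal.ofReal (Real.exp c - 1) * μ A := by
        rw [lintegral_add_right _ measurable_const, setLIntegral_const]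
    _ ≤ (∫⁻ x, hEnt (ν.rnDeriv μ x) ∂μ) + ENNReal.ofReal (Real.exp c - 1) * μ A :=
        add_le_add_left (setLIntegral_le_lintegral _ _) _
    _ ≤ relEnt ν μ + 1 := by
        rw [relEnt, if_pos hac]
        exact add_le_add_right htail _

lemma exists_bump {Z : Type*} [MetricSpace Z] (z : Z) (δ : ℝ) (hδ : 0 < δ) :
    ∃ g : Z →ᵇ ℝ, g z = 1 ∧ (∀ y, 0 ≤ g y) ∧ (∀ y, g y ≤ 1) ∧
      ∀ y, δ ≤ dist y z → g y = 0 := by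
  have hb : ∀ y : Z, 0 ≤ max 0 (1 - dist y z / δ) ∧ max 0 (1 - dist y z / δ) ≤ 1 := by
    intro y
    refine ⟨le_max_left _ _, max_le zero_le_one ?_⟩
    have h1 : 0 ≤ dist y z / δ := div_nonneg dist_nonneg hδ.le
    linarith
  refine ⟨⟨⟨fun y => max 0 (1 - dist y z / δ), by fun_prop⟩, ⟨2, ?_⟩⟩, ?_, ?_, ?_, ?_⟩
  · intro x y
    simp only [ContinuousMap.coe_mk]
    rw [Real.dist_eq]
    have h1 := hb x
    have h2 := hb y
    rw [abs_le]
    constructor <;> linarith [h1.1, h1.2, h2.1, h2.2]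
  · show max 0 (1 - dist z z / δ) = 1
    simp [dist_self]
  · intro y; exact (hb y).1
  · intro y; exact (hb y).2
  · intro y hy
    show max 0 (1 - dist y z / δ) = 0
    have h1 : (1:ℝ) ≤ dist y z / δ := (one_le_div hδ).2 hy
    exact max_eq_left (by linarith)


/-- Remark `r:ldgamma`: if for every `z` there are probability measures
`Q_t → δ_z` narrowly with `limsup (1/t) H(Q_t|P_t) ≤ J(z)`, then the large deviations lower
bound holds with rate the lower semicontinuous envelope of `J`. -/
theorem stmt15 {Z : Type*} [MetricSpace Z] [PolishSpace Z] [MeasurableSpace Z] [BorelSpace Z]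
    (Pfam : ℝ → Measure Z) (hP : ∀ t : ℝ, 0 < t → IsProbabilityMeasure (Pfam t))
    (J : Z → ℝ≥0∞)
    (hQ : ∀ z : Z, ∃ Q : ℝ → Measure Z,
      (∀ t, IsProbabilityMeasure (Q t)) ∧
      (∀ g : Z →ᵇ ℝ, Tendsto (fun t => ∫ y, g y ∂(Q t)) atTop (nhds (g z))) ∧
      Filter.limsup (fun t : ℝ => ENNReal.ofReal (1 / t) * relEnt (Q t) (Pfam t)) atTop
        ≤ J z) :
    ∀ O : Set Z, IsOpen O →
      - ((⨅ z ∈ O, lscEnv J z : ℝ≥0∞) : EReal) ≤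
        Filter.liminf (fun t : ℝ => ((1 / t : ℝ) : EReal) * ENNReal.log (Pfam t O)) atTop := by
  intro O hO
  set L := Filter.liminf (fun t : ℝ => ((1 / t : ℝ) : EReal) * ENNReal.log (Pfam t O)) atTop
    with hLdef
  have core : ∀ z ∈ O, J z ≠ ⊤ → ∀ c : ℝ, c < -(J z).toReal → (c : EReal) ≤ L := by
    intro z hz hJtop c hc
    set T := (J z).toReal with hTdef
    have hT0 : 0 ≤ T := ENNReal.toReal_nonneg
    have hc0 : c < 0 := lt_of_lt_of_le hc (by linarith)
    set ε := (-c - T) / 4 with hεdef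
    have hεpos : 0 < ε := by rw [hεdef]; linarith
    have hcT : -c = T + 4 * ε := by rw [hεdef]; ring
    set q1 : ℝ := (T + 3 * ε) / (T + 4 * ε) with hq1def
    have hden : 0 < T + 4 * ε := by linarith
    have hq1pos : 0 < q1 := div_pos (by linarith) hden
    have hq1lt : q1 < 1 := (div_lt_one hden).2 (by linarith)
    obtain ⟨Q, hQprob, hQweak, hQlimsup⟩ := hQ z
    obtain ⟨δ, hδpos, hball⟩ := Metric.isOpen_iff.1 hO z hz
    obtain ⟨g, hgz, hg0, hg1, hgout⟩ := exists_bump z δ hδpos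
    have E2 : ∀ᶠ t : ℝ in atTop, 1 / t ≤ ε := by
      filter_upwards [eventually_ge_atTop (1/ε), eventually_gt_atTop (0:ℝ)] with t h1 h2
      rw [div_le_iff₀ hεpos] at h1
      rw [div_le_iff₀ h2]
      nlinarith
    have E3 : ∀ᶠ t : ℝ in atTop,
        ENNReal.ofReal (1/t) * relEnt (Q t) (Pfam t) ≤ J z + ENNReal.ofReal ε := by
      have hlt : Filter.limsup (fun t : ℝ => ENNReal.ofReal (1 / t) * relEnt (Q t) (Pfam t))
          atTop < J z + ENNReal.ofReal ε :=
        lt_of_le_of_lt hQlimsup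
          (ENNReal.lt_add_right hJtop (ne_of_gt (ENNReal.ofReal_pos.2 hεpos)))
      filter_upwards [Filter.eventually_lt_of_limsup_lt hlt] with t ht
      exact ht.le
    have E4 : ∀ᶠ t : ℝ in atTop, q1 ≤ ∫ y, g y ∂(Q t) := by
      have htend : Tendsto (fun t => ∫ y, g y ∂(Q t)) atTop (nhds 1) := hgz ▸ hQweak g
      exact htend.eventually_const_le hq1lt
    have Ev : ∀ᶠ t : ℝ in atTop,
        (c : EReal) ≤ ((1/t : ℝ) : EReal) * ENNReal.log (Pfam t O) := by
      filter_upwards [eventually_gt_atTop (0:ℝ), E2, E3, E4] with t ht hts hent hq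
      haveI := hP t ht
      haveI := hQprob t
      have hRHSne : J z + ENNReal.ofReal ε ≠ ⊤ :=
        ENNReal.add_ne_top.2 ⟨hJtop, ENNReal.ofReal_ne_top⟩
      have hofpos : ENNReal.ofReal (1/t) ≠ 0 :=
        ne_of_gt (ENNReal.ofReal_pos.2 (by positivity))
      have hac : Q t ≪ Pfam t := by
        by_contra hcon
        rw [relEnt, if_neg hcon, ENNReal.mul_top hofpos] at hent
        exact hRHSne (top_le_iff.1 hent)
      have hHne : relEnt (Q t) (Pfam t) ≠ ⊤ := by
        intro htop
        rw [htop, ENNReal.mul_top hofpos] at hent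
        exact hRHSne (top_le_iff.1 hent)
      have hQO : q1 ≤ ((Q t) O).toReal := by
        have hgle : ∀ y, g y ≤ O.indicator (fun _ => (1:ℝ)) y := by
          intro y
          by_cases hy : y ∈ O
          · rw [Set.indicator_of_mem hy]; exact hg1 y
          · rw [Set.indicator_of_notMem hy]
            have hdist : δ ≤ dist y z := by
              by_contra hlt
              push_neg at hlt
              exact hy (hball hlt)
            rw [hgout y hdist]
        have hint : ∫ y, g y ∂(Q t) ≤ ∫ y, O.indicator (fun _ => (1:ℝ)) y ∂(Q t) :=
          integral_mono (g.integrable _)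
            ((integrable_const (1:ℝ)).indicator hO.measurableSet) hgle
        rw [integral_indicator_const (1:ℝ) hO.measurableSet, smul_eq_mul, mul_one] at hint
        exact le_trans hq hint
      have hPO0 : Pfam t O ≠ 0 := by
        intro h0
        have h1 : Q t O = 0 := hac h0
        rw [h1] at hQO
        simp at hQO
        linarith
      have hPOtop : Pfam t O ≠ ⊤ := measure_ne_top _ _
      set p := ((Pfam t) O).toReal with hpdef
      have hppos : 0 < p := ENNReal.toReal_pos hPO0 hPOtop
      have hHr : (1/t) * (relEnt (Q t) (Pfam t)).toReal ≤ T + ε := by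
        have h1 := ENNReal.toReal_mono hRHSne hent
        rwa [ENNReal.toReal_mul, ENNReal.toReal_ofReal (by positivity),
          ENNReal.toReal_add hJtop ENNReal.ofReal_ne_top,
          ENNReal.toReal_ofReal hεpos.le] at h1
      have hfinal : c ≤ (1/t) * Real.log p := by
        rcases le_or_gt 0 (Real.log p) with hlog | hlog
        · nlinarith [mul_nonneg (by positivity : (0:ℝ) ≤ 1/t) hlog]
        · have hkey := keyIneq (Q t) (Pfam t) hac O
          have hkr : (-Real.log p) * ((Q t) O).toReal
              ≤ (relEnt (Q t) (Pfam t)).toReal + 1 := by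
            have h1 := ENNReal.toReal_mono (ENNReal.add_ne_top.2 ⟨hHne, one_ne_top⟩) hkey
            rwa [ENNReal.toReal_mul, ENNReal.toReal_ofReal (by linarith),
              ENNReal.toReal_add hHne one_ne_top, ENNReal.toReal_one] at h1
          set Hr := (relEnt (Q t) (Pfam t)).toReal with hHrdef
          have hHr0 : 0 ≤ Hr := ENNReal.toReal_nonneg
          have h3 : Hr ≤ t * (T + ε) := by
            have e1 : t * (1/t * Hr) = Hr := by field_simp
            have e2 := mul_le_mul_of_nonneg_left hHr ht.le
            rw [e1] at e2
            exact e2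
          have h4 : 1 ≤ t * ε := by
            rw [div_le_iff₀ ht] at hts
            linarith
          have h2 : Hr + 1 ≤ t * (T + 2*ε) := by linarith
          have h5 : (-Real.log p) * q1 ≤ t * (T + 2*ε) :=
            le_trans (mul_le_mul_of_nonneg_left hQO (by linarith)) (le_trans hkr h2)
          have h6 : (-Real.log p) * (T + 3*ε) ≤ t * (T + 2*ε) * (T + 4*ε) := by
            have h7 := mul_le_mul_of_nonneg_right h5 hden.le
            have h8 : (-Real.log p) * ((T + 3*ε) / (T + 4*ε)) * (T + 4*ε)
                = (-Real.log p) * (T + 3*ε) := by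
              field_simp
            rw [hq1def] at h7
            rw [h8] at h7
            exact h7
          have h9 : -Real.log p ≤ t * (T + 4*ε) := by
            nlinarith [h6, mul_nonneg (mul_nonneg ht.le hden.le) hεpos.le]
          have h10 : (1/t) * (-(t * (T + 4*ε))) ≤ (1/t) * Real.log p :=
            mul_le_mul_of_nonneg_left (by linarith) (by positivity)
          have h11 : (1/t) * (-(t * (T + 4*ε))) = -(T + 4*ε) := by
            field_simp
          nlinarith [h10, h11]
      have hlogP : ENNReal.log (Pfam t O) = ((Real.log p : ℝ) : EReal) := by
        rw [ENNReal.log, if_neg hPO0, if_neg hPOtop]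
      rw [hlogP, ← EReal.coe_mul, EReal.coe_le_coe_iff]
      exact hfinal
    calc (c : EReal) = liminf (fun _ : ℝ => (c : EReal)) atTop := (liminf_const _).symm
      _ ≤ L := liminf_le_liminf Ev
  set m := ⨅ y ∈ O, J y with hmdef
  have hmono : -((⨅ z ∈ O, lscEnv J z : ℝ≥0∞) : EReal) ≤ -((m : ℝ≥0∞) : EReal) := by
    apply EReal.neg_le_neg_iff.2
    apply EReal.coe_ennreal_le_coe_ennreal_iff.2
    refine le_iInf₂ fun z hz => ?_
    rw [lscEnv]
    exact le_iSup₂_of_le O (hO.mem_nhds hz) le_rfl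
  refine le_trans hmono ?_
  rcases eq_or_ne m ⊤ with hmt | hmt
  · rw [hmt]
    simp
  · have key : ∀ c : ℝ, c < -m.toReal → (c : EReal) ≤ L := by
      intro c hc
      set ε := (-m.toReal - c)/2 with hεdef
      have hεpos : 0 < ε := by rw [hεdef]; linarith
      have hlt : m < m + ENNReal.ofReal ε :=
        ENNReal.lt_add_right hmt (ne_of_gt (ENNReal.ofReal_pos.2 hεpos))
      obtain ⟨y, hy, hylt⟩ : ∃ y ∈ O, J y < m + ENNReal.ofReal ε := by
        have h1 : (⨅ y ∈ O, J y) < m + ENNReal.ofReal ε := hlt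
        simpa using iInf_lt_iff.1 h1 |>.imp fun y hy => by
          simpa using iInf_lt_iff.1 hy
      have hyt : J y ≠ ⊤ := by
        intro h
        rw [h] at hylt
        exact absurd hylt (not_lt.2 le_top)
      have hJyr : (J y).toReal ≤ m.toReal + ε := by
        have h1 := ENNReal.toReal_mono (ENNReal.add_ne_top.2 ⟨hmt, ENNReal.ofReal_ne_top⟩) hylt.le
        rwa [ENNReal.toReal_add hmt ENNReal.ofReal_ne_top,
          ENNReal.toReal_ofReal hεpos.le] at h1
      refine core y hy hyt c (by linarith)
    have hcoe : -((m : ℝ≥0∞) : EReal) = ((-m.toReal : ℝ) : EReal) := by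
      have h1 : ((m : ℝ≥0∞) : EReal) = ((m.toReal : ℝ) : EReal) := by
        conv_lhs => rw [(ENNReal.ofReal_toReal hmt).symm]
        rw [EReal.coe_ennreal_ofReal, max_eq_left ENNReal.toReal_nonneg]
      rw [h1, ← EReal.coe_neg]
    rw [hcoe]
    by_contra hcon
    push_neg at hcon
    obtain ⟨x, hx1, hx2⟩ := EReal.lt_iff_exists_real_btwn.1 hcon
    exact absurd (key x (by exact_mod_cast hx2)) (not_le.2 hx1)
end

section
/- (Zeros of the rate functional, case E = ∅.) Assume ξ(x) > 0 for all x ∈ X (with X compact and assumptions (A1)–(A2)). Then μ̄(τ) < ∞, and I(ν) = 0 if and only if ν = μ, where μ(dx) = τ(x)μ̄(dx)/μ̄(τ). -/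
open MeasureTheory ENNReal Filter Set Topology
open scoped NNReal

lemma le_eexp (b : ℝ≥0∞) : b ≤ eexp b := by
  unfold eexp
  rcases eq_or_ne b ⊤ with hb | hb
  · simp [hb]
  · rw [if_neg hb]
    conv_lhs => rw [← ENNReal.ofReal_toReal hb]
    exact ENNReal.ofReal_le_ofReal (by linarith [Real.add_one_le_exp b.toReal])

lemma hEnt_one : hEnt 1 = 0 := by
  simp [hEnt]

lemma hEnt_eq_zero {a : ℝ≥0∞} (h : hEnt a = 0) : a = 1 := by
  unfold hEnt at h
  rcases eq_or_ne a ⊤ with ha | ha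
  · simp [ha] at h
  · rw [if_neg ha, ENNReal.ofReal_eq_zero] at h
    set t := a.toReal with ht
    have htnn : 0 ≤ t := ENNReal.toReal_nonneg
    have ht1 : t = 1 := by
      by_contra hne
      rcases eq_or_lt_of_le htnn with h0 | h0
      · rw [← h0] at h; norm_num at h
      · have h2 : Real.log t⁻¹ < t⁻¹ - 1 :=
          Real.log_lt_sub_one_of_pos (by positivity) (by
            intro hc; exact hne (by field_simp at hc; linarith))
        rw [Real.log_inv] at h2
        have : -(t * Real.log t) < t * (t⁻¹ - 1) := by
          have := mul_lt_mul_of_pos_left h2 h0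
          simpa [neg_mul, mul_neg] using this
        rw [mul_sub, mul_inv_cancel₀ (ne_of_gt h0)] at this
        nlinarith
    exact (ENNReal.toReal_eq_one_iff a).mp ht1

lemma measurable_hEnt : Measurable hEnt := by
  unfold hEnt
  apply Measurable.ite (measurableSet_singleton ⊤) measurable_const
  apply ENNReal.measurable_ofReal.comp
  apply Measurable.add_const
  exact (ENNReal.measurable_toReal).mul
    ((Real.measurable_log.comp ENNReal.measurable_toReal).sub_const 1)

lemma exists_expMoment {X : Type*} [MetricSpace X] [CompactSpace X] [MeasurableSpace X]
    [BorelSpace X] (μ : Measure X) [IsProbabilityMeasure μ] (τ : X → ℝ≥0∞)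
    (hpos : ∀ x : X, 0 < xi μ τ x) :
    ∃ r : ℝ≥0, 0 < r ∧ ∫⁻ x, eexp ((r : ℝ≥0∞) * τ x) ∂μ < ⊤ := by
  have key : ∀ x : X, ∃ δ : ℝ, 0 < δ ∧ ∃ r : ℝ≥0, 0 < r ∧
      ∫⁻ y in Metric.ball x δ, eexp ((r : ℝ≥0∞) * τ y) ∂μ < ⊤ := by
    intro x
    obtain ⟨δ, hδ⟩ := lt_iSup_iff.mp (hpos x)
    obtain ⟨hδ0, hδ'⟩ := lt_iSup_iff.mp hδ
    obtain ⟨c, hc, h0c⟩ := lt_sSup_iff.mp hδ'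
    obtain ⟨r, rfl, hint⟩ := hc
    exact ⟨δ, hδ0, r, by exact_mod_cast h0c, hint⟩
  choose δ hδ r hr hint using key
  obtain ⟨t, ht⟩ := isCompact_univ.elim_finite_subcover (fun x => Metric.ball x (δ x))
    (fun x => Metric.isOpen_ball) (fun y _ => mem_iUnion.mpr ⟨y, Metric.mem_ball_self (hδ y)⟩)
  have hXne : Nonempty X := by
    by_contra hne
    rw [not_nonempty_iff] at hne
    have h1 : μ univ = 1 := measure_univ
    rw [Set.univ_eq_empty_iff.mpr hne] at h1
    simp at h1
  obtain ⟨x0⟩ := hXne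
  obtain ⟨z, hz, _⟩ := mem_iUnion₂.mp (ht (mem_univ x0))
  have tne : t.Nonempty := ⟨z, hz⟩
  refine ⟨t.inf' tne r, (Finset.lt_inf'_iff tne).mpr fun i _ => hr i, ?_⟩
  set r₀ : ℝ≥0 := t.inf' tne r with hr₀def
  have hcov : (univ : Set X) ⊆ ⋃ i : t, Metric.ball (i : X) (δ i) := by
    intro y hy
    obtain ⟨x, hx, hmem⟩ := mem_iUnion₂.mp (ht hy)
    exact mem_iUnion.mpr ⟨⟨x, hx⟩, hmem⟩
  calc ∫⁻ x, eexp ((r₀ : ℝ≥0∞) * τ x) ∂μ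
      = ∫⁻ x, eexp ((r₀ : ℝ≥0∞) * τ x) ∂(μ.restrict univ) := by rw [Measure.restrict_univ]
    _ ≤ ∫⁻ x, eexp ((r₀ : ℝ≥0∞) * τ x)
          ∂(μ.restrict (⋃ i : t, Metric.ball (i : X) (δ i))) :=
        lintegral_mono' (Measure.restrict_mono hcov le_rfl) le_rfl
    _ ≤ ∫⁻ x, eexp ((r₀ : ℝ≥0∞) * τ x)
          ∂(Measure.sum fun i : t => μ.restrict (Metric.ball (i : X) (δ i))) :=
        lintegral_mono' Measure.restrict_iUnion_le le_rfl
    _ = ∑' i : t, ∫⁻ x in Metric.ball (i : X) (δ i), eexp ((r₀ : ℝ≥0∞) * τ x) ∂μ :=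
        lintegral_sum_measure _ _
    _ < ⊤ := by
        rw [tsum_fintype]
        refine ENNReal.sum_lt_top.mpr fun i _ => lt_of_le_of_lt ?_ (hint (i : X))
        refine lintegral_mono fun x => eexp_mono (mul_le_mul_left ?_ (τ x))
        exact_mod_cast Finset.inf'_le r i.2

/-- Remark `r:conv`, case `E = ∅`: if `ξ > 0` everywhere on a compact
space, then `μ̄(τ) < ∞`, and `I(ν) = 0` iff `ν = μ` where `μ(dx) = τ(x)μ̄(dx)/μ̄(τ)`. -/
theorem stmt17 {X : Type*} [MetricSpace X] [CompactSpace X] [MeasurableSpace X] [BorelSpace X]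
    (μ : Measure X) [IsProbabilityMeasure μ] (τ : X → ℝ≥0∞) (hτ : Measurable τ)
    (h0 : μ {x | τ x = 0} = 0) (hinf : μ {x | τ x = ⊤} = 0)
    (hA2 : μ {x | xi μ τ x < ⊤} = 0)
    (hpos : ∀ x : X, 0 < xi μ τ x) :
    (∫⁻ x, τ x ∂μ < ⊤) ∧
      ∀ ν : Measure X, IsProbabilityMeasure ν →
        (Ifun μ τ ν = 0 ↔ ν = (∫⁻ x, τ x ∂μ)⁻¹ • μ.withDensity τ) := by
  obtain ⟨r, hr, hrint⟩ := exists_expMoment μ τ hpos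
  have hr0 : (r : ℝ≥0∞) ≠ 0 := by exact_mod_cast hr.ne'
  have hrtop : (r : ℝ≥0∞) ≠ ⊤ := ENNReal.coe_ne_top
  -- μ(τ) < ∞
  have hT : ∫⁻ x, τ x ∂μ < ⊤ := by
    have hle : ∀ x, τ x ≤ (r : ℝ≥0∞)⁻¹ * eexp ((r : ℝ≥0∞) * τ x) := by
      intro x
      calc τ x = (r : ℝ≥0∞)⁻¹ * ((r : ℝ≥0∞) * τ x) := by
            rw [← mul_assoc, ENNReal.inv_mul_cancel hr0 hrtop, one_mul]
        _ ≤ (r : ℝ≥0∞)⁻¹ * eexp ((r : ℝ≥0∞) * τ x) :=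
            mul_le_mul_right (le_eexp _) _
    calc ∫⁻ x, τ x ∂μ ≤ ∫⁻ x, (r : ℝ≥0∞)⁻¹ * eexp ((r : ℝ≥0∞) * τ x) ∂μ := lintegral_mono hle
      _ = (r : ℝ≥0∞)⁻¹ * ∫⁻ x, eexp ((r : ℝ≥0∞) * τ x) ∂μ :=
          lintegral_const_mul' _ _ (ENNReal.inv_ne_top.mpr hr0)
      _ < ⊤ := ENNReal.mul_lt_top (ENNReal.inv_lt_top.mpr (pos_iff_ne_zero.mpr hr0)) hrint
  -- ξ ≥ r everywhere
  have hxi_ge : ∀ x, (r : ℝ≥0∞) ≤ xi μ τ x := by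
    intro x
    have h1 : (r : ℝ≥0∞) ≤ xiDelta μ τ 1 x := by
      apply le_sSup
      exact ⟨r, rfl, lt_of_le_of_lt (setLIntegral_le_lintegral _ _) hrint⟩
    calc (r : ℝ≥0∞) ≤ xiDelta μ τ 1 x := h1
      _ ≤ xi μ τ x := le_iSup₂ (f := fun δ (_ : 0 < δ) => xiDelta μ τ δ x) 1 one_pos
  set T := ∫⁻ x, τ x ∂μ with hTdef
  -- T ≠ 0
  have hτ0ae : ∀ᵐ x ∂μ, τ x ≠ 0 := by
    rw [ae_iff]; simpa using h0
  have hτtopae : ∀ᵐ x ∂μ, τ x ≠ ⊤ := by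
    rw [ae_iff]; simpa using hinf
  have hT0 : T ≠ 0 := by
    intro h
    have h2 : τ =ᵐ[μ] 0 := (lintegral_eq_zero_iff hτ).mp h
    have h3 : (fun _ : X => (1 : ℝ≥0∞)) =ᵐ[μ] 0 := by
      filter_upwards [h2, hτ0ae] with x hx hx'
      exact absurd hx hx'
    have h4 : (∫⁻ _ : X, (1 : ℝ≥0∞) ∂μ) = 0 := by
      rw [lintegral_congr_ae h3]; simp
    simp [lintegral_one] at h4
  have hTtop : T ≠ ⊤ := hT.ne
  have hττinv : (fun x => τ x * (τ x)⁻¹) =ᵐ[μ] (fun _ => (1 : ℝ≥0∞)) := by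
    filter_upwards [hτ0ae, hτtopae] with x hx hx'
    exact ENNReal.mul_inv_cancel hx hx'
  refine ⟨hT, fun ν hν => ?_⟩
  set μhat := T⁻¹ • μ.withDensity τ with hμhatdef
  haveI : IsFiniteMeasure (μ.withDensity τ) := isFiniteMeasure_withDensity hTtop
  have hwdu : (μ.withDensity τ) univ = T := by
    rw [withDensity_apply _ MeasurableSet.univ, setLIntegral_univ]
  haveI : IsProbabilityMeasure μhat := by
    constructor
    rw [hμhatdef, Measure.smul_apply, smul_eq_mul, hwdu, ENNReal.inv_mul_cancel hT0 hTtop]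
  have hac : μhat ≪ μ := by
    intro s hs
    have : (μ.withDensity τ) s = 0 := withDensity_absolutelyContinuous μ τ hs
    simp [hμhatdef, Measure.smul_apply, this]
  constructor
  · -- forward direction
    intro hI
    unfold Ifun at hI
    set νa := absPart ν μ with hνadef
    by_cases hc : ∫⁻ x, (τ x)⁻¹ ∂νa = ⊤
    · rw [if_pos hc] at hI; exact absurd hI top_ne_zero
    rw [if_neg hc] at hI
    obtain ⟨hprod, hsing⟩ := add_eq_zero.mp hI
    -- singular part vanishes
    have hνs : ν.singularPart μ = 0 := by
      have h1 : (r : ℝ≥0∞) * (ν.singularPart μ) univ ≤ ∫⁻ x, xi μ τ x ∂(ν.singularPart μ) := by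
        rw [← lintegral_const]
        exact lintegral_mono fun x => hxi_ge x
      rw [hsing] at h1
      have h2 : (ν.singularPart μ) univ = 0 := by
        have := le_antisymm h1 zero_le
        rcases mul_eq_zero.mp this with h | h
        · exact absurd h hr0
        · exact h
      exact Measure.measure_univ_eq_zero.mp h2
    -- ν = νa
    have hνeq : ν = νa := by
      conv_lhs => rw [ν.haveLebesgueDecomposition_add μ]
      rw [hνs, zero_add, hνadef, absPart]
    set ρ := ν.rnDeriv μ with hρdef
    have hρmeas : Measurable ρ := Measure.measurable_rnDeriv ν μ
    have hρint : ∫⁻ x, ρ x ∂μ = 1 := by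
      have : νa univ = 1 := by rw [← hνeq]; exact measure_univ
      rwa [hνadef, absPart, withDensity_apply _ MeasurableSet.univ, setLIntegral_univ] at this
    set c := ∫⁻ x, (τ x)⁻¹ ∂νa with hcdef
    have hcint : c = ∫⁻ x, ρ x * (τ x)⁻¹ ∂μ := by
      rw [hcdef, hνadef, absPart, lintegral_withDensity_eq_lintegral_mul μ hρmeas (g := fun x => (τ x)⁻¹) hτ.inv]
      rfl
    have hc0 : c ≠ 0 := by
      intro h
      rw [hcint] at h
      have h2 : (fun x => ρ x * (τ x)⁻¹) =ᵐ[μ] 0 :=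
        (lintegral_eq_zero_iff (hρmeas.mul hτ.inv)).mp h
      have h3 : ρ =ᵐ[μ] 0 := by
        filter_upwards [h2, hτtopae] with x hx hx'
        rcases mul_eq_zero.mp hx with h | h
        · exact h
        · exact absurd (ENNReal.inv_eq_zero.mp h) hx'
      rw [lintegral_congr_ae h3] at hρint
      simp at hρint
    -- relative entropy vanishes
    have hrel : relEnt (tauTilt τ νa) μ = 0 := by
      rcases mul_eq_zero.mp hprod with h | h
      · exact absurd h hc0
      · exact h
    -- identify tauTilt
    have hmT : tauTilt τ νa = μ.withDensity (fun x => c⁻¹ * (ρ x * (τ x)⁻¹)) := by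
      rw [tauTilt, ← hcdef, hνadef, absPart, ← withDensity_mul μ hρmeas (g := fun x => (τ x)⁻¹) hτ.inv]
      rw [← withDensity_smul (f := ρ * fun x => (τ x)⁻¹) c⁻¹ (hρmeas.mul hτ.inv)]
      rfl
    have hgmeas : Measurable (fun x => c⁻¹ * (ρ x * (τ x)⁻¹)) :=
      (hρmeas.mul hτ.inv).const_mul c⁻¹
    have hmac : tauTilt τ νa ≪ μ := hmT ▸ withDensity_absolutelyContinuous μ _
    rw [relEnt, if_pos hmac] at hrel
    have hrn : (tauTilt τ νa).rnDeriv μ =ᵐ[μ] (fun x => c⁻¹ * (ρ x * (τ x)⁻¹)) := by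
      rw [hmT]; exact Measure.rnDeriv_withDensity μ hgmeas
    have hhent : ∀ᵐ x ∂μ, hEnt ((tauTilt τ νa).rnDeriv μ x) = 0 := by
      refine (lintegral_eq_zero_iff ?_).mp hrel
      exact measurable_hEnt.comp (Measure.measurable_rnDeriv _ _)
    have hone : ∀ᵐ x ∂μ, c⁻¹ * (ρ x * (τ x)⁻¹) = 1 := by
      filter_upwards [hhent, hrn] with x hx hx'
      exact hEnt_eq_zero (by rwa [hx'] at hx)
    have hctop : c ≠ ⊤ := hc
    -- ρ = c * τ a.e.
    have hρcτ : ρ =ᵐ[μ] (fun x => c * τ x) := by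
      filter_upwards [hone, hτ0ae, hτtopae] with x hx hx0 hxt
      have h1 : ρ x * (τ x)⁻¹ = c := by
        have h2 := congrArg (fun z => c * z) hx
        simpa [← mul_assoc, ENNReal.mul_inv_cancel hc0 hctop] using h2
      calc ρ x = ρ x * ((τ x)⁻¹ * τ x) := by
            rw [ENNReal.inv_mul_cancel hx0 hxt, mul_one]
        _ = (ρ x * (τ x)⁻¹) * τ x := by ring
        _ = c * τ x := by rw [h1]
    have hν2 : ν = c • μ.withDensity τ := by
      rw [hνeq, hνadef, absPart, withDensity_congr_ae hρcτ]
      rw [← withDensity_smul c hτ]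
      rfl
    have hcT : c * T = 1 := by
      have h1 : ν univ = 1 := measure_univ
      rw [hν2, Measure.smul_apply, smul_eq_mul, hwdu] at h1
      exact h1
    have hcval : c = T⁻¹ := by
      calc c = c * (T * T⁻¹) := by rw [ENNReal.mul_inv_cancel hT0 hTtop, mul_one]
        _ = (c * T) * T⁻¹ := by ring
        _ = T⁻¹ := by rw [hcT, one_mul]
    rw [hν2, hcval]
  · -- backward direction
    intro hν2
    have habs : absPart ν μ = ν := by
      rw [hν2]
      exact Measure.withDensity_rnDeriv_eq _ _ (hν2 ▸ hac)
    have hνint : ∫⁻ x, (τ x)⁻¹ ∂(absPart ν μ) = T⁻¹ := by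
      rw [habs, hν2, hμhatdef, lintegral_smul_measure,
        lintegral_withDensity_eq_lintegral_mul μ hτ (g := fun x => (τ x)⁻¹) hτ.inv]
      have : ∫⁻ x, (τ * fun x => (τ x)⁻¹) x ∂μ = ∫⁻ _, (1 : ℝ≥0∞) ∂μ :=
        lintegral_congr_ae hττinv
      rw [this, lintegral_one, measure_univ, smul_eq_mul, mul_one]
    have htilt : tauTilt τ (absPart ν μ) = μ := by
      rw [tauTilt, hνint, inv_inv T, habs, hν2, hμhatdef, withDensity_smul_measure,
        smul_smul, ENNReal.mul_inv_cancel hT0 hTtop, one_smul,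
        ← withDensity_mul μ hτ (g := fun x => (τ x)⁻¹) hτ.inv,
        show (τ * fun x => (τ x)⁻¹) = (fun x => τ x * (τ x)⁻¹) from rfl,
        withDensity_congr_ae hττinv]
      simpa using withDensity_one (μ := μ)
    have hrel : relEnt μ μ = 0 := by
      rw [relEnt, if_pos Measure.AbsolutelyContinuous.rfl]
      have h1 : ∀ᵐ x ∂μ, hEnt (μ.rnDeriv μ x) = 0 := by
        filter_upwards [Measure.rnDeriv_self μ] with x hx
        rw [hx, hEnt_one]
      rw [lintegral_congr_ae h1, lintegral_zero]
    have hsing : ν.singularPart μ = 0 :=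
      (Measure.singularPart_eq_zero ν μ).mpr (hν2 ▸ hac)
    rw [Ifun, hνint, if_neg (by simp [hT0]), htilt, hrel, hsing, mul_zero, zero_add,
      lintegral_zero_measure]
end

section
/- (Reduction to compact state space.) Embed the Polish space X continuously into the compact space [0,1]^ℕ and let Y be the closure of X. Extend μ̄ by μ̄(Y∖X) = 0 and τ by τ = +∞ on Y∖X. If assumption (A3) holds on X (ξ^∞ = +∞), then ξ_Y(x) = +∞ for all x ∈ Y∖X, where ξ_Y is the local exponential-moment threshold computed in Y. -/
open MeasureTheory ENNReal Filter Set Topology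
open scoped NNReal

/-- from Proposition `p:embedding`: embed the Polish space `X` densely in
a compact metric space `Y` (e.g. the closure of `X` in `[0,1]^ℕ`), extend `μ̄` by
`μ̄(Y∖X) = 0` and `τ` by `τ = +∞` on `Y∖X`. If `ξ^∞ = +∞` on `X` (assumption (A3)), then
`ξ_Y(y) = +∞` for every `y ∈ Y∖X`. -/
theorem stmt18 {X Y : Type*} [MetricSpace X] [PolishSpace X] [MeasurableSpace X] [BorelSpace X]
    [MetricSpace Y] [CompactSpace Y] [MeasurableSpace Y] [BorelSpace Y]
    (e : X → Y) (he : Topology.IsEmbedding e) (hdense : DenseRange e)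
    (μ : Measure X) [IsProbabilityMeasure μ] (τ : X → ℝ≥0∞) (hτ : Measurable τ)
    (hA3 : xiInf μ τ = ⊤) :
    ∀ y : Y, y ∉ Set.range e →
      xi (μ.map e) (Function.extend e τ fun _ => ⊤) y = ⊤ := by
  intro y hy
  suffices h : xiInf μ τ ≤ xi (μ.map e) (Function.extend e τ fun _ => ⊤) y by
    rw [hA3] at h; exact top_le_iff.mp h
  apply sSup_le
  rintro c ⟨r, rfl, K, hK, hint⟩
  have hKc : IsClosed (e '' K) := (hK.image he.continuous).isClosed
  have hyK : y ∈ (e '' K)ᶜ := fun h => hy (Set.image_subset_range e K h)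
  obtain ⟨δ, hδ, hball⟩ := Metric.isOpen_iff.1 hKc.isOpen_compl y hyK
  have hsub : e ⁻¹' Metric.ball y δ ⊆ Kᶜ := fun x hx hxK => hball hx ⟨x, hxK, rfl⟩
  have hme : MeasurableEmbedding e := he.continuous.measurableEmbedding he.injective
  have key : (r : ℝ≥0∞) ≤ xiDelta (μ.map e) (Function.extend e τ fun _ => ⊤) δ y := by
    apply le_sSup
    refine ⟨r, rfl, ?_⟩
    rw [Measure.restrict_map hme.measurable measurableSet_ball,
        hme.lintegral_map]
    calc ∫⁻ x in e ⁻¹' Metric.ball y δ,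
          eexp ((r : ℝ≥0∞) * Function.extend e τ (fun _ => ⊤) (e x)) ∂μ
        = ∫⁻ x in e ⁻¹' Metric.ball y δ, eexp ((r : ℝ≥0∞) * τ x) ∂μ := by
          apply lintegral_congr; intro x; rw [he.injective.extend_apply]
      _ ≤ ∫⁻ x in Kᶜ, eexp ((r : ℝ≥0∞) * τ x) ∂μ := lintegral_mono_set hsub
      _ < ⊤ := hint
  exact key.trans (le_iSup₂ (f := fun δ (_ : 0 < δ) =>
    xiDelta (μ.map e) (Function.extend e τ fun _ => ⊤) δ y) δ hδ)
end
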